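/- arXiv:1411.7890 — 7 statements merged into one kernel-verified Lean document; each statement's English description precedes it below -/
import Mathlib

section
/- The simplicial complex Δ(I) is vertex decomposable. -/
open MvPolynomial

noncomputable section

/-- The vertex set / variable set `𝒮` of the polarized ring `S^℘`: pairs `⟨i, j⟩` with
`1 ≤ i ≤ n`, `1 ≤ j ≤ b i`.  Here `j : Fin (b i)` encodes the paper's second index `j + 1`,
so the vertex `⟨i, j⟩` stands for the variable `x_{i, j+1}` of the paper. -/
abbrev PolVars (m : ℕ) (b : Fin m → ℕ) := Σ i : Fin m, Fin (b i)

/-- `I` is a monomial ideal, i.e. generated by monomials. -/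
def IsMonomialIdeal {K : Type} [Field K] {m : ℕ} (I : Ideal (MvPolynomial (Fin m) K)) : Prop :=
  ∃ A : Set (Fin m →₀ ℕ), I = Ideal.span ((fun c => (monomial c (1 : K))) '' A)

/-- The exponent vectors of the minimal monomial generators of a monomial ideal:
the exponent vectors of monomials of `I` that are minimal under divisibility. -/
def MinGens (K : Type) [Field K] {m : ℕ} (I : Ideal (MvPolynomial (Fin m) K)) :
    Set (Fin m →₀ ℕ) :=
  {c | (monomial c (1 : K)) ∈ I ∧ ∀ c' : Fin m →₀ ℕ, c' ≤ c → c' ≠ c →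
      (monomial c' (1 : K)) ∉ I}

/-- The polarization `v^℘ = ∏_{i=1}^n ∏_{j=1}^{c_i} x_{i,j}` of the monomial `v = x^c`. -/
def polMon (K : Type) [Field K] {m : ℕ} (b : Fin m → ℕ) (c : Fin m →₀ ℕ) :
    MvPolynomial (PolVars m b) K :=
  ∏ v ∈ Finset.univ.filter (fun v : PolVars m b => (v.2 : ℕ) < c v.1), X v

/-- The polarization `I^℘ ⊆ S^℘` of the monomial ideal `I`, generated by the
polarizations of the minimal monomial generators of `I`. -/
def polarIdeal (K : Type) [Field K] {m : ℕ} (b : Fin m → ℕ)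
    (I : Ideal (MvPolynomial (Fin m) K)) : Ideal (MvPolynomial (PolVars m b) K) :=
  Ideal.span (polMon K b '' MinGens K I)

/-- The squarefree monomial `x_{1,a_1+1} ⋯ x_{n,a_n+1} ∈ S^℘` associated with the
exponent vector `a` of a monomial `x^a ∈ Mon(S∖I)`. -/
def genL (K : Type) [Field K] {m : ℕ} (b : Fin m → ℕ) (a : Fin m →₀ ℕ) :
    MvPolynomial (PolVars m b) K :=
  ∏ v ∈ Finset.univ.filter (fun v : PolVars m b => (v.2 : ℕ) = a v.1), X v

/-- The ideal `L(I) ⊆ S^℘`, generated by the monomials `x_{1,a_1+1} ⋯ x_{n,a_n+1}`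
with `x^a ∈ Mon(S∖I)`. -/
def LIdeal (K : Type) [Field K] {m : ℕ} (b : Fin m → ℕ)
    (I : Ideal (MvPolynomial (Fin m) K)) : Ideal (MvPolynomial (PolVars m b) K) :=
  Ideal.span (genL K b '' {a | (monomial a (1 : K)) ∉ I})

/-- The monomial prime ideal `φ(x^a) = (x_{1,a_1+1}, …, x_{n,a_n+1}) ⊆ S^℘`. -/
def phiIdeal (K : Type) [Field K] {m : ℕ} (b : Fin m → ℕ) (a : Fin m →₀ ℕ) :
    Ideal (MvPolynomial (PolVars m b) K) :=
  Ideal.span ((fun v => (X v : MvPolynomial (PolVars m b) K)) ''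
    {v : PolVars m b | (v.2 : ℕ) = a v.1})

/-- The set of faces of the simplicial complex `Δ(I)` on the vertex set `𝒮`, whose
Stanley–Reisner ideal is `I^℘`: a finite set `F` of vertices is a face iff the
squarefree monomial `∏_{v ∈ F} v` does not belong to `I^℘`. -/
def facesDelta (K : Type) [Field K] {m : ℕ} (b : Fin m → ℕ)
    (I : Ideal (MvPolynomial (Fin m) K)) : Set (Finset (PolVars m b)) :=
  {F | (∏ v ∈ F, (X v : MvPolynomial (PolVars m b) K)) ∉ polarIdeal K b I}

/-- `F` is a facet (maximal face) of the simplicial complex (set of faces) `Δ`. -/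
def IsFacetOf {V : Type} (Δ : Set (Finset V)) (F : Finset V) : Prop :=
  F ∈ Δ ∧ ∀ G ∈ Δ, F ⊆ G → F = G

/-- Zero-dimensionality data for a monomial ideal: `I` is a proper monomial ideal and,
for each `i`, `b i ≥ 1` is the smallest positive integer with `x_i^{b i} ∈ I`
(equivalently, `dim S/I = 0` with the `b i` minimal). -/
def ZeroDimData (K : Type) [Field K] {m : ℕ} (b : Fin m → ℕ)
    (I : Ideal (MvPolynomial (Fin m) K)) : Prop :=
  IsMonomialIdeal I ∧ I ≠ ⊤ ∧ ∀ i : Fin m, 1 ≤ b i ∧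
    (monomial (Finsupp.single i (b i)) (1 : K)) ∈ I ∧
    ∀ j : ℕ, j < b i → (monomial (Finsupp.single i j) (1 : K)) ∉ I

/-- The deletion `del_Δ(v) = {G ∈ Δ : v ∉ G}`. -/
def delC {V : Type} (Δ : Set (Finset V)) (v : V) : Set (Finset V) :=
  {G ∈ Δ | v ∉ G}

/-- The link `link_Δ(v) = {G ∈ Δ : v ∉ G and G ∪ {v} ∈ Δ}`. -/
def linkC {V : Type} [DecidableEq V] (Δ : Set (Finset V)) (v : V) : Set (Finset V) :=
  {G ∈ Δ | v ∉ G ∧ insert v G ∈ Δ}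

/-- Vertex decomposability of a simplicial complex (given as its set of faces):
`Δ` is vertex decomposable if it is a simplex, or it contains a vertex `v` such that
(i) every facet of `del_Δ(v)` is a facet of `Δ` (`v` is a shedding vertex), and
(ii) both `del_Δ(v)` and `link_Δ(v)` are vertex decomposable. -/
inductive IsVertexDecomposable {V : Type} [DecidableEq V] : Set (Finset V) → Prop
  | simplex (F : Finset V) : IsVertexDecomposable {G | G ⊆ F}
  | shed (Δ : Set (Finset V)) (v : V) (hv : {v} ∈ Δ)
      (hshed : ∀ F : Finset V, IsFacetOf (delC Δ v) F → IsFacetOf Δ F)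
      (hdel : IsVertexDecomposable (delC Δ v))
      (hlink : IsVertexDecomposable (linkC Δ v)) : IsVertexDecomposable Δ

/-- The vertex map replacing `x_{i₀,j}` by `x_{i₀,j-1}` and fixing all other vertices. -/
def shiftDown {m : ℕ} {b : Fin m → ℕ} (i₀ : Fin m) (v : PolVars m b) : PolVars m b :=
  ⟨v.1, ⟨(v.2 : ℕ) - (if v.1 = i₀ then 1 else 0),
    Nat.lt_of_le_of_lt (Nat.sub_le _ _) v.2.isLt⟩⟩

/-- `set(u)` for a generator `u = genL a` of `L(I)` with respect to the order `r`:
the set of variables `x` of `S^℘` such that `x·u` lies in the ideal generated by the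
generators of `L(I)` preceding `u`. -/
def setOfGen (K : Type) [Field K] {m : ℕ} (b : Fin m → ℕ)
    (I : Ideal (MvPolynomial (Fin m) K))
    (r : (Fin m →₀ ℕ) → (Fin m →₀ ℕ) → Prop) (a : Fin m →₀ ℕ) : Set (PolVars m b) :=
  {v | ∃ a' : Fin m →₀ ℕ, (monomial a' (1 : K)) ∉ I ∧ r a' a ∧ a' ≠ a ∧
      genL K b a' ∣ X v * genL K b a}

/-- `J(u,i)`: the weakly increasing sequence of the second indices of the variables
`x_{i,·}` dividing the monomial with exponent vector `e` (counted with multiplicity). -/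
def rowList {m : ℕ} {b : Fin m → ℕ} (e : PolVars m b →₀ ℕ) (i : Fin m) : List ℕ :=
  Multiset.sort (∑ j : Fin (b i), Multiset.replicate (e ⟨i, j⟩) (j : ℕ)) (· ≤ ·)

/-- Lexicographic (weak) order on sequences of natural numbers. -/
def lexLE (l l' : List ℕ) : Prop := l = l' ∨ List.Lex (· < ·) l l'

/-- The exponent vectors of the (minimal) monomial generators of `L(I)^k`:
products of `k` generators of `L(I)`. -/
def GLkE (K : Type) [Field K] {m : ℕ} (b : Fin m → ℕ)
    (I : Ideal (MvPolynomial (Fin m) K)) (k : ℕ) : Set (PolVars m b →₀ ℕ) :=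
  {e | ∃ f : Fin k → (Fin m →₀ ℕ), (∀ j, (monomial (f j) (1 : K)) ∉ I) ∧
      (monomial e (1 : K) : MvPolynomial (PolVars m b) K) = ∏ j, genL K b (f j)}

/-- The depth of a module `M` with respect to the ideal `J`: the maximal length of an
`M`-regular sequence consisting of elements of `J`. -/
def myDepth (R : Type) [CommRing R] (J : Ideal R) (M : Type) [AddCommGroup M]
    [Module R M] : ℕ :=
  sSup {k : ℕ | ∃ rs : List R, rs.length = k ∧ (∀ r ∈ rs, r ∈ J) ∧
      RingTheory.Sequence.IsRegular M rs}

/-- `max{deg lcm(u_1, …, u_k) : u_1, …, u_k ∈ Mon(S∖I)}`; the degree of the lcm of the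
monomials `x^{f 1}, …, x^{f k}` is `∑_i max_j (f j) i`. -/
def maxLcmDeg (K : Type) [Field K] {m : ℕ} (I : Ideal (MvPolynomial (Fin m) K))
    (k : ℕ) : ℕ :=
  sSup {d : ℕ | ∃ f : Fin k → (Fin m →₀ ℕ), (∀ j, (monomial (f j) (1 : K)) ∉ I) ∧
      d = ∑ i : Fin m, Finset.univ.sup (fun j => (f j) i)}

namespace Stmt10Aux

variable {n : ℕ} {b : Fin n → ℕ}

/-- the set of marked vertices of the tuple `a` -/
def marks (a : ∀ i : Fin n, Fin (b i)) : Finset (PolVars n b) :=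
  Finset.univ.image (fun i => (⟨i, a i⟩ : PolVars n b))

lemma mem_marks {a : ∀ i : Fin n, Fin (b i)} {x : PolVars n b} :
    x ∈ marks a ↔ a x.1 = x.2 := by
  constructor
  · intro hx
    obtain ⟨i, -, rfl⟩ := Finset.mem_image.1 hx
    rfl
  · intro hx
    refine Finset.mem_image.2 ⟨x.1, Finset.mem_univ _, ?_⟩
    obtain ⟨i, j⟩ := x
    simpa using hx

/-- the abstract combinatorial complex -/
def DeltaA (A : Finset (∀ i : Fin n, Fin (b i))) (B : Finset (PolVars n b)) :
    Set (Finset (PolVars n b)) :=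
  {F | Disjoint F B ∧ ∃ a ∈ A, ∀ i, (⟨i, a i⟩ : PolVars n b) ∉ F}

lemma mk_eq_mk_iff {i : Fin n} {j j' : Fin (b i)} :
    (⟨i, j⟩ : PolVars n b) = ⟨i, j'⟩ ↔ j = j' := by simp

lemma mk_ne_mk {i i' : Fin n} {j : Fin (b i)} {j' : Fin (b i')} (h : i ≠ i') :
    (⟨i, j⟩ : PolVars n b) ≠ ⟨i', j'⟩ := by simp [h]

lemma marks_subset_marks {a a' : ∀ i : Fin n, Fin (b i)} (h : marks a' ⊆ marks a) : a' = a := by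
  funext i
  have h0 : (⟨i, a' i⟩ : PolVars n b) ∈ marks a' := mem_marks.2 rfl
  have := mem_marks.1 (h h0)
  exact this.symm

lemma eq_mk_of_mem_marks {a : ∀ i : Fin n, Fin (b i)} {x : PolVars n b}
    (h : x ∈ marks a) : x = ⟨x.1, a x.1⟩ := by
  rw [mem_marks.1 h]

lemma mem_DeltaA_sub {A : Finset (∀ i : Fin n, Fin (b i))} {B F : Finset (PolVars n b)}
    (h : F ∈ DeltaA A B) :
    ∃ a ∈ A, F ⊆ Finset.univ \ (B ∪ marks a) ∧
      (Finset.univ \ (B ∪ marks a)) ∈ DeltaA A B := by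
  obtain ⟨hFB, a, haA, hav⟩ := h
  refine ⟨a, haA, ?_, ?_, a, haA, ?_⟩
  · intro x hx
    simp only [Finset.mem_sdiff, Finset.mem_univ, Finset.mem_union, true_and]
    push_neg
    refine ⟨fun hxB => (Finset.disjoint_left.1 hFB hx) hxB, fun hxm => ?_⟩
    rw [eq_mk_of_mem_marks hxm] at hx
    exact hav x.1 hx
  · exact Finset.sdiff_disjoint.mono_right Finset.subset_union_left
  · intro i
    simp only [Finset.mem_sdiff, Finset.mem_univ, Finset.mem_union, true_and, not_and, not_not]
    exact Or.inr (mem_marks.2 rfl)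

lemma Fa_facet {A : Finset (∀ i : Fin n, Fin (b i))} {B : Finset (PolVars n b)}
    (hAB : ∀ a ∈ A, Disjoint (marks a) B) {a : ∀ i : Fin n, Fin (b i)} (ha : a ∈ A) :
    IsFacetOf (DeltaA A B) (Finset.univ \ (B ∪ marks a)) := by
  constructor
  · refine ⟨Finset.sdiff_disjoint.mono_right Finset.subset_union_left, a, ha, fun i => ?_⟩
    simp only [Finset.mem_sdiff, Finset.mem_univ, Finset.mem_union, true_and, not_and, not_not]
    exact Or.inr (mem_marks.2 rfl)
  · rintro G ⟨hGB, a'', ha''A, hav''⟩ hsub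
    have hm : marks a'' ⊆ marks a := by
      intro x hx
      have hx' := eq_mk_of_mem_marks hx
      have hG : x ∉ G := by rw [hx']; exact hav'' x.1
      have hF : x ∉ Finset.univ \ (B ∪ marks a) := fun hh => hG (hsub hh)
      simp only [Finset.mem_sdiff, Finset.mem_univ, Finset.mem_union, true_and, not_and,
        not_not, forall_const] at hF
      rcases hF with hB' | hm'
      · exact absurd hB' (Finset.disjoint_left.1 (hAB a'' ha''A) hx)
      · exact hm'
    have heq : a'' = a := marks_subset_marks hm
    subst heq
    refine Finset.Subset.antisymm hsub ?_
    intro x hx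
    simp only [Finset.mem_sdiff, Finset.mem_univ, Finset.mem_union, true_and]
    push_neg
    refine ⟨fun hxB => (Finset.disjoint_left.1 hGB hx) hxB, fun hxm => ?_⟩
    rw [eq_mk_of_mem_marks hxm] at hx
    exact hav'' x.1 hx

lemma deltaA_vd : ∀ (N : ℕ) (A : Finset (∀ i : Fin n, Fin (b i))), A.card ≤ N → A.Nonempty →
    ∀ g : ∀ i : Fin n, Fin (b i), (∀ a ∈ A, ∀ i, g i ≤ a i) →
    (∀ a ∈ A, ∀ a' : ∀ i : Fin n, Fin (b i), (∀ i, g i ≤ a' i) → (∀ i, a' i ≤ a i) → a' ∈ A) →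
    ∀ B : Finset (PolVars n b), (∀ v ∈ B, (v.2 : ℕ) < (g v.1 : ℕ)) →
    IsVertexDecomposable (DeltaA A B) := by
  intro N
  induction N with
  | zero =>
      intro A hcard hne
      obtain ⟨a, ha⟩ := hne
      have h0 := Finset.card_eq_zero.1 (Nat.le_zero.1 hcard)
      simp [h0] at ha
  | succ N ih =>
      intro A hcard hne g hg hdown B hB
      classical
      have hmdisj : ∀ a ∈ A, Disjoint (marks a) B := by
        intro a ha
        rw [Finset.disjoint_left]
        intro x hxm hxB
        have h1 := hB x hxB
        have h2 := mem_marks.1 hxm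
        have h3 := hg a ha x.1
        rw [h2] at h3
        exact absurd h1 (not_lt.2 h3)
      by_cases hbase : ∀ a ∈ A, a = g
      · -- simplex case
        obtain ⟨a, haA⟩ := hne
        have hgA : g ∈ A := by rwa [hbase a haA] at haA
        have hEq : DeltaA A B = {G | G ⊆ Finset.univ \ (B ∪ marks g)} := by
          ext F
          constructor
          · intro hF
            obtain ⟨a', ha'A, hsub, -⟩ := mem_DeltaA_sub hF
            rwa [hbase a' ha'A] at hsub
          · intro hsub
            refine ⟨?_, g, hgA, fun i => ?_⟩
            · refine Finset.disjoint_left.2 fun x hx hxB => ?_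
              have h2 := hsub hx
              simp only [Finset.mem_sdiff, Finset.mem_univ, Finset.mem_union, true_and] at h2
              exact h2 (Or.inl hxB)
            · intro hmem
              have h2 := hsub hmem
              simp only [Finset.mem_sdiff, Finset.mem_univ, Finset.mem_union, true_and] at h2
              exact h2 (Or.inr (mem_marks.2 rfl))
        rw [hEq]
        exact IsVertexDecomposable.simplex _
      · -- shedding case
        push_neg at hbase
        obtain ⟨a₀, ha₀A, ha₀ne⟩ := hbase
        have hex : ∃ i, g i < a₀ i := by
          by_contra hcon
          push_neg at hcon
          exact ha₀ne (funext fun i => le_antisymm (hcon i) (hg a₀ ha₀A i))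
        obtain ⟨i₀, hi₀⟩ := hex
        have hvB : (⟨i₀, g i₀⟩ : PolVars n b) ∉ B := fun h => absurd (hB _ h) (lt_irrefl _)
        set A₀ : Finset (∀ i : Fin n, Fin (b i)) := A.filter (fun a => a i₀ = g i₀) with hA₀
        set A' : Finset (∀ i : Fin n, Fin (b i)) := A.filter (fun a => a i₀ ≠ g i₀) with hA'
        have hupd : ∀ a ∈ A, Function.update a i₀ (g i₀) ∈ A₀ := by
          intro a ha
          have hmem : Function.update a i₀ (g i₀) ∈ A := by
            refine hdown a ha _ (fun i => ?_) (fun i => ?_)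
            · by_cases hii : i = i₀
              · subst hii; simp
              · simp [Function.update_of_ne hii, hg a ha i]
            · by_cases hii : i = i₀
              · subst hii; simp [hg a ha i]
              · simp [Function.update_of_ne hii]
          simp [hA₀, Finset.mem_filter, hmem]
        have hmarks_ne : ∀ (a : ∀ i : Fin n, Fin (b i)), a i₀ ≠ g i₀ →
            ∀ i, (⟨i, a i⟩ : PolVars n b) ≠ ⟨i₀, g i₀⟩ := by
          intro a hane i
          by_cases hii : i = i₀
          · subst hii; exact fun h => hane (mk_eq_mk_iff.1 h)
          · exact mk_ne_mk hii
        -- del equality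
        have hdelEq : delC (DeltaA A B) ⟨i₀, g i₀⟩ = DeltaA A₀ B := by
          ext F
          constructor
          · rintro ⟨⟨hFB, a, haA, hav⟩, hvF⟩
            refine ⟨hFB, Function.update a i₀ (g i₀), hupd a haA, fun i => ?_⟩
            by_cases hii : i = i₀
            · subst hii; simpa using hvF
            · simpa [Function.update_of_ne hii] using hav i
          · rintro ⟨hFB, a, haA, hav⟩
            rw [hA₀, Finset.mem_filter] at haA
            refine ⟨⟨hFB, a, haA.1, hav⟩, ?_⟩
            have h2 := hav i₀
            rwa [haA.2] at h2
        -- link equality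
        have hlt' : (g i₀ : ℕ) + 1 < b i₀ := Nat.lt_of_le_of_lt hi₀ (a₀ i₀).isLt
        set g' : ∀ i : Fin n, Fin (b i) :=
          Function.update g i₀ ⟨(g i₀ : ℕ) + 1, hlt'⟩ with hg'_def
        have hgg' : ∀ i, g i ≤ g' i := by
          intro i
          by_cases hii : i = i₀
          · subst hii
            rw [hg'_def]
            simp only [Function.update_self]
            rw [Fin.le_def]
            exact Nat.le_succ _
          · rw [hg'_def, Function.update_of_ne hii]
        have hlinkEq : linkC (DeltaA A B) ⟨i₀, g i₀⟩ = DeltaA A' (insert ⟨i₀, g i₀⟩ B) := by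
          ext G
          constructor
          · rintro ⟨⟨hGB, -⟩, hvG, ⟨hinsB, a, haA, havins⟩⟩
            have hane : a i₀ ≠ g i₀ := by
              intro heq
              apply havins i₀
              rw [heq]
              exact Finset.mem_insert_self _ _
            refine ⟨Finset.disjoint_insert_right.2 ⟨hvG, hGB⟩, a, ?_, fun i => ?_⟩
            · simp [hA', Finset.mem_filter, haA, hane]
            · exact fun h => havins i (Finset.mem_insert_of_mem h)
          · rintro ⟨hGB', a, haA', hav⟩
            rw [hA', Finset.mem_filter] at haA'
            obtain ⟨hvG, hGB⟩ := Finset.disjoint_insert_right.1 hGB'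
            refine ⟨⟨hGB, a, haA'.1, hav⟩, hvG, ?_, a, haA'.1, fun i => ?_⟩
            · exact Finset.disjoint_insert_left.2 ⟨hvB, hGB⟩
            · rw [Finset.mem_insert]
              push_neg
              exact ⟨hmarks_ne a haA'.2 i, hav i⟩
        -- shedding
        refine IsVertexDecomposable.shed _ ⟨i₀, g i₀⟩ ?_ ?_ ?_ ?_
        · refine ⟨Finset.disjoint_singleton_left.2 hvB, a₀, ha₀A, fun i => ?_⟩
          rw [Finset.mem_singleton]
          exact hmarks_ne a₀ (ne_of_gt hi₀) i
        · intro F hF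
          rw [hdelEq] at hF
          obtain ⟨a, haA₀, hsub, hmem⟩ := mem_DeltaA_sub hF.1
          have hFa : F = Finset.univ \ (B ∪ marks a) := hF.2 _ hmem hsub
          rw [hFa]
          exact Fa_facet hmdisj (Finset.mem_filter.1 haA₀).1
        · rw [hdelEq]
          have hA₀sub : A₀ ⊆ A := Finset.filter_subset _ _
          have hA₀card : A₀.card ≤ N := by
            have hssub : A₀ ⊂ A := by
              refine (Finset.ssubset_iff_of_subset hA₀sub).2 ⟨a₀, ha₀A, ?_⟩
              simp [hA₀, Finset.mem_filter, ne_of_gt hi₀]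
            have := Finset.card_lt_card hssub
            omega
          refine ih A₀ hA₀card ⟨_, hupd a₀ ha₀A⟩ g
            (fun a ha i => hg a (hA₀sub ha) i) ?_ B hB
          intro a ha a' hga' ha'a
          have h1 : a' ∈ A := hdown a (hA₀sub ha) a' hga' ha'a
          have h2 : a' i₀ = g i₀ := by
            have h3 := (Finset.mem_filter.1 ha).2
            exact le_antisymm (h3 ▸ ha'a i₀) (hga' i₀)
          simp [hA₀, Finset.mem_filter, h1, h2]
        · rw [hlinkEq]
          have hA'sub : A' ⊆ A := Finset.filter_subset _ _
          have hA'card : A'.card ≤ N := by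
            have hssub : A' ⊂ A := by
              refine (Finset.ssubset_iff_of_subset hA'sub).2
                ⟨Function.update a₀ i₀ (g i₀), Finset.filter_subset _ _ (hupd a₀ ha₀A), ?_⟩
              have h3 := (Finset.mem_filter.1 (hupd a₀ ha₀A)).2
              simp [hA', Finset.mem_filter, h3]
            have := Finset.card_lt_card hssub
            omega
          have hgA' : ∀ a ∈ A', ∀ i, g' i ≤ a i := by
            intro a ha i
            have haA := Finset.mem_filter.1 ha
            by_cases hii : i = i₀
            · subst hii
              have h1 : g i < a i := lt_of_le_of_ne (hg a haA.1 i) (Ne.symm haA.2)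
              rw [hg'_def]
              simp only [Function.update_self]
              rw [Fin.le_def]
              exact h1
            · rw [hg'_def, Function.update_of_ne hii]
              exact hg a haA.1 i
          refine ih A' hA'card ⟨a₀, by simp [hA', Finset.mem_filter, ha₀A, ne_of_gt hi₀]⟩ g'
            hgA' ?_ (insert ⟨i₀, g i₀⟩ B) ?_
          · intro a ha a' hga' ha'a
            have h1 : a' ∈ A := hdown a (hA'sub ha) a'
              (fun i => le_trans (hgg' i) (hga' i)) ha'a
            have h2 : a' i₀ ≠ g i₀ := by
              intro heq
              have h3 := hga' i₀
              rw [hg'_def] at h3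
              simp only [Function.update_self] at h3
              rw [heq] at h3
              have h4 : (g i₀ : ℕ) + 1 ≤ (g i₀ : ℕ) := Fin.le_def.1 h3
              omega
            simp [hA', Finset.mem_filter, h1, h2]
          · intro w hw
            rcases Finset.mem_insert.1 hw with rfl | hwB
            · rw [hg'_def]
              simp
            · have h1 := hB w hwB
              have h2 := Fin.le_def.1 (hgg' w.1)
              omega


section Bridge

variable {K : Type} [Field K]

lemma prodX_eq_monomial (F : Finset (PolVars n b)) :
    (∏ v ∈ F, X v : MvPolynomial (PolVars n b) K)
      = monomial (∑ v ∈ F, Finsupp.single v 1) 1 := by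
  classical
  induction F using Finset.cons_induction with
  | empty => simp
  | cons a s ha ih =>
      rw [Finset.prod_cons, Finset.sum_cons, ih,
        show (X a : MvPolynomial (PolVars n b) K) = monomial (Finsupp.single a 1) 1 from rfl,
        monomial_mul, one_mul]

lemma indF_apply (F : Finset (PolVars n b)) (w : PolVars n b) :
    (∑ v ∈ F, Finsupp.single v (1 : ℕ)) w = if w ∈ F then 1 else 0 := by
  classical
  rw [Finsupp.finset_sum_apply]
  simp [Finsupp.single_apply]

lemma indF_le_indF {S F : Finset (PolVars n b)} :
    (∑ v ∈ S, Finsupp.single v (1 : ℕ)) ≤ (∑ v ∈ F, Finsupp.single v 1) ↔ S ⊆ F := by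
  classical
  constructor
  · intro h x hx
    have h1 := Finsupp.le_def.1 h x
    rw [indF_apply, indF_apply, if_pos hx] at h1
    by_contra hxF
    rw [if_neg hxF] at h1
    omega
  · intro h
    refine Finsupp.le_def.2 fun x => ?_
    rw [indF_apply, indF_apply]
    by_cases hx : x ∈ S
    · rw [if_pos hx, if_pos (h hx)]
    · simp [hx]

lemma face_iff (I : Ideal (MvPolynomial (Fin n) K)) (F : Finset (PolVars n b)) :
    (∏ v ∈ F, X v : MvPolynomial (PolVars n b) K) ∈ polarIdeal K b I ↔
      ∃ c ∈ MinGens K I, ∀ v : PolVars n b, (v.2 : ℕ) < c v.1 → v ∈ F := by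
  classical
  have himg : polMon K b '' MinGens K I
      = (fun e => monomial e (1 : K)) ''
          ((fun c => ∑ v ∈ Finset.univ.filter (fun v : PolVars n b => (v.2 : ℕ) < c v.1),
            Finsupp.single v 1) '' MinGens K I) := by
    rw [Set.image_image]
    exact Set.image_congr fun c _ => prodX_eq_monomial _
  rw [polarIdeal, himg, prodX_eq_monomial, mem_ideal_span_monomial_image]
  have hsupp : (monomial (∑ v ∈ F, Finsupp.single v (1 : ℕ)) (1 : K)).support
      = {∑ v ∈ F, Finsupp.single v 1} := by
    rw [support_monomial, if_neg one_ne_zero]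
  rw [hsupp]
  simp only [Finset.mem_singleton, forall_eq, Set.mem_image, exists_exists_and_eq_and]
  constructor
  · rintro ⟨c, hc, hle⟩
    refine ⟨c, hc, fun v hv => ?_⟩
    exact indF_le_indF.1 hle (Finset.mem_filter.2 ⟨Finset.mem_univ _, hv⟩)
  · rintro ⟨c, hc, hsub⟩
    refine ⟨c, hc, indF_le_indF.2 fun v hv => ?_⟩
    exact hsub v (Finset.mem_filter.1 hv).2

lemma monomial_mem_of_le {I : Ideal (MvPolynomial (Fin n) K)} {c a : Fin n →₀ ℕ}
    (hca : c ≤ a) (hc : monomial c (1 : K) ∈ I) : monomial a (1 : K) ∈ I := by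
  have h : (monomial a (1 : K)) = monomial (a - c) (1 : K) * monomial c 1 := by
    rw [monomial_mul, one_mul, tsub_add_cancel_of_le hca]
  rw [h]
  exact Ideal.mul_mem_left _ _ hc

lemma sum_lt_of_le_of_ne {c a : Fin n →₀ ℕ} (hle : c ≤ a) (hne : c ≠ a) :
    ∑ i, c i < ∑ i, a i := by
  have hx : ∃ i, c i ≠ a i := by
    by_contra hcon
    push_neg at hcon
    exact hne (Finsupp.ext hcon)
  obtain ⟨i, hi⟩ := hx
  exact Finset.sum_lt_sum (fun j _ => Finsupp.le_def.1 hle j)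
    ⟨i, Finset.mem_univ i, lt_of_le_of_ne (Finsupp.le_def.1 hle i) hi⟩

lemma exists_minGen {I : Ideal (MvPolynomial (Fin n) K)} :
    ∀ (d : ℕ) (a : Fin n →₀ ℕ), (∑ i, a i) ≤ d → monomial a (1 : K) ∈ I →
      ∃ c ∈ MinGens K I, c ≤ a := by
  intro d
  induction d with
  | zero =>
      intro a hd ha
      refine ⟨a, ⟨ha, fun c' hle hne hmem => ?_⟩, le_refl a⟩
      have := sum_lt_of_le_of_ne hle hne
      omega
  | succ d ih =>
      intro a hd ha
      by_cases hmin : ∀ c' : Fin n →₀ ℕ, c' ≤ a → c' ≠ a → monomial c' (1 : K) ∉ I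
      · exact ⟨a, ⟨ha, hmin⟩, le_refl a⟩
      · push_neg at hmin
        obtain ⟨c', hle, hne, hmem⟩ := hmin
        have hlt := sum_lt_of_le_of_ne hle hne
        obtain ⟨c, hc, hcle⟩ := ih c' (by omega) hmem
        exact ⟨c, hc, le_trans hcle hle⟩

lemma le_single_self {i : Fin n} {k : ℕ} {c' : Fin n →₀ ℕ} (h : c' ≤ Finsupp.single i k) :
    c' = Finsupp.single i (c' i) := by
  ext x
  by_cases hx : x = i
  · subst hx; simp
  · have h1 := Finsupp.le_def.1 h x
    rw [Finsupp.single_apply, if_neg (fun hh => hx hh.symm)] at h1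
    rw [Finsupp.single_apply, if_neg (fun hh => hx hh.symm)]
    omega

lemma single_mem_minGens {I : Ideal (MvPolynomial (Fin n) K)}
    (hI : ZeroDimData K b I) (i : Fin n) : Finsupp.single i (b i) ∈ MinGens K I := by
  obtain ⟨-, htop, hb⟩ := hI
  refine ⟨(hb i).2.1, fun c' hle hne => ?_⟩
  have h1 : c' = Finsupp.single i (c' i) := le_single_self hle
  have h2 : c' i ≤ b i := by
    have := Finsupp.le_def.1 hle i
    simpa using this
  have h3 : c' i < b i := lt_of_le_of_ne h2 (fun h => hne (by rw [h1, h]))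
  rw [h1]
  exact (hb i).2.2 _ h3

end Bridge

end Stmt10Aux

/-- The simplicial complex `Δ(I)` is vertex decomposable. -/
theorem statement10 {K : Type} [Field K] {n : ℕ} (b : Fin n → ℕ)
    (I : Ideal (MvPolynomial (Fin n) K)) (hI : ZeroDimData K b I) :
    IsVertexDecomposable (facesDelta K b I) := by
  classical
  obtain ⟨hmon, htop, hb⟩ := hI
  set toF : (∀ i : Fin n, Fin (b i)) → (Fin n →₀ ℕ) :=
    fun a => Finsupp.equivFunOnFinite.symm (fun i => (a i : ℕ)) with htoF
  have htoF_apply : ∀ (a : ∀ i : Fin n, Fin (b i)) (i : Fin n), toF a i = (a i : ℕ) := by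
    intro a i
    simp [htoF]
  set A : Finset (∀ i : Fin n, Fin (b i)) :=
    Finset.univ.filter (fun a => monomial (toF a) (1 : K) ∉ I) with hA
  have hAmem : ∀ a : ∀ i : Fin n, Fin (b i), a ∈ A ↔ monomial (toF a) (1 : K) ∉ I := by
    intro a
    simp [hA]
  have hfaces : facesDelta K b I = Stmt10Aux.DeltaA A ∅ := by
    ext F
    simp only [facesDelta, Set.mem_setOf_eq, Stmt10Aux.DeltaA, Finset.disjoint_empty_right,
      true_and]
    rw [Stmt10Aux.face_iff]
    constructor
    · intro hF
      push_neg at hF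
      have hMne : ∀ i : Fin n,
          (Finset.univ.filter (fun j : Fin (b i) => (⟨i, j⟩ : PolVars n b) ∉ F)).Nonempty := by
        intro i
        rw [Finset.filter_nonempty_iff]
        by_contra hcon
        push_neg at hcon
        simp only [Finset.mem_univ, true_implies, not_not] at hcon
        obtain ⟨v, hvlt, hvF⟩ := hF (Finsupp.single i (b i))
          (Stmt10Aux.single_mem_minGens ⟨hmon, htop, hb⟩ i)
        by_cases hvi : v.1 = i
        · obtain ⟨i', j⟩ := v
          cases hvi
          exact hvF (hcon j)
        · rw [Finsupp.single_apply, if_neg (fun hh => hvi hh.symm)] at hvlt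
          omega
      set a : ∀ i : Fin n, Fin (b i) :=
        fun i => (Finset.univ.filter (fun j : Fin (b i) => (⟨i, j⟩ : PolVars n b) ∉ F)).min'
          (hMne i) with ha
      have ha1 : ∀ i : Fin n, (⟨i, a i⟩ : PolVars n b) ∉ F := by
        intro i
        have := Finset.min'_mem _ (hMne i)
        exact (Finset.mem_filter.1 this).2
      have ha2 : ∀ (i : Fin n) (j : Fin (b i)), (⟨i, j⟩ : PolVars n b) ∉ F → a i ≤ j := by
        intro i j hj
        exact Finset.min'_le (Finset.univ.filter (fun j : Fin (b i) => (⟨i, j⟩ : PolVars n b) ∉ F))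
          j (Finset.mem_filter.2 ⟨Finset.mem_univ _, hj⟩)
      refine ⟨a, ?_, ha1⟩
      rw [hAmem]
      intro hIn
      obtain ⟨c, hcmin, hcle⟩ := Stmt10Aux.exists_minGen (∑ i, toF a i) (toF a) le_rfl hIn
      obtain ⟨v, hvlt, hvF⟩ := hF c hcmin
      have h1 : (a v.1 : ℕ) ≤ (v.2 : ℕ) := ha2 v.1 v.2 (by rw [Sigma.eta]; exact hvF)
      have h2 : c v.1 ≤ toF a v.1 := Finsupp.le_def.1 hcle v.1
      rw [htoF_apply] at h2
      omega
    · rintro ⟨a, haA, hav⟩ ⟨c, hcmin, hsub⟩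
      rw [hAmem] at haA
      by_cases hca : ∀ i, c i ≤ (a i : ℕ)
      · have hle : c ≤ toF a := Finsupp.le_def.2 fun i => by rw [htoF_apply]; exact hca i
        exact haA (Stmt10Aux.monomial_mem_of_le hle hcmin.1)
      · push_neg at hca
        obtain ⟨i, hi⟩ := hca
        exact hav i (hsub ⟨i, a i⟩ hi)
  rw [hfaces]
  have hb1 : ∀ i, 0 < b i := fun i => (hb i).1
  have hzA : (fun i => (⟨0, hb1 i⟩ : Fin (b i))) ∈ A := by
    rw [hAmem]
    have h0 : toF (fun i => (⟨0, hb1 i⟩ : Fin (b i))) = 0 := by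
      ext i
      rw [htoF_apply]
      simp
    rw [h0]
    intro hIn
    apply htop
    rw [Ideal.eq_top_iff_one]
    simpa using hIn
  refine Stmt10Aux.deltaA_vd A.card A le_rfl ⟨_, hzA⟩ (fun i => ⟨0, hb1 i⟩)
    (fun a _ i => by rw [Fin.le_def]; exact Nat.zero_le _) ?_ ∅ (by simp)
  intro a ha a' hga' ha'a
  rw [hAmem] at ha ⊢
  intro hIn
  apply ha
  refine Stmt10Aux.monomial_mem_of_le ?_ hIn
  refine Finsupp.le_def.2 fun i => ?_
  rw [htoF_apply, htoF_apply]
  exact Fin.le_def.1 (ha'a i)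

end
end

section
/- Assume b_n > 1. Then the facets of del_{Δ(I)}(x_{n,1}) are exactly the facets of Δ(I) not containing x_{n,1}; in particular, every facet of del_{Δ(I)}(x_{n,1}) is a facet of Δ(I), i.e., x_{n,1} is a shedding vertex of Δ(I). -/
open MvPolynomial

noncomputable section

lemma prodX_eq {K : Type} [Field K] {V : Type} [DecidableEq V] (F : Finset V) :
    (∏ v ∈ F, (X v : MvPolynomial V K)) = monomial (∑ v ∈ F, Finsupp.single v 1) 1 := by
  classical
  induction F using Finset.induction_on with
  | empty => simp
  | insert _ _ h ih =>
    rw [Finset.prod_insert h, Finset.sum_insert h, ih, X, monomial_mul, one_mul]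

lemma ind_apply {V : Type} [DecidableEq V] (A : Finset V) (w : V) :
    (∑ v ∈ A, Finsupp.single v (1 : ℕ)) w = if w ∈ A then 1 else 0 := by
  rw [Finset.sum_apply']
  simp [Finsupp.single_apply]

lemma ind_le_iff {V : Type} [DecidableEq V] (A B : Finset V) :
    (∑ v ∈ A, Finsupp.single v (1 : ℕ)) ≤ (∑ v ∈ B, Finsupp.single v 1) ↔ A ⊆ B := by
  constructor
  · intro h x hx
    have hx' := Finsupp.le_def.mp h x
    rw [ind_apply, ind_apply, if_pos hx] at hx'
    by_contra hxB
    rw [if_neg hxB] at hx'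
    omega
  · intro h
    rw [Finsupp.le_def]
    intro x
    rw [ind_apply, ind_apply]
    by_cases hx : x ∈ A
    · rw [if_pos hx, if_pos (h hx)]
    · simp [hx]

/-- A squarefree monomial `∏_{v∈F} x_v` belongs to the polarization `I^℘` iff the support
of the polarization of some minimal generator of `I` is contained in `F`. -/
lemma mem_polar_iff {K : Type} [Field K] {m : ℕ} (b : Fin m → ℕ)
    (I : Ideal (MvPolynomial (Fin m) K)) (F : Finset (PolVars m b)) :
    (∏ v ∈ F, (X v : MvPolynomial (PolVars m b) K)) ∈ polarIdeal K b I ↔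
      ∃ c ∈ MinGens K I, ∀ v : PolVars m b, (v.2 : ℕ) < c v.1 → v ∈ F := by
  classical
  have himg : polMon K b '' MinGens K I =
      (fun s => monomial s (1 : K)) ''
        ((fun c => ∑ v ∈ Finset.univ.filter
            (fun v : PolVars m b => (v.2 : ℕ) < c v.1), Finsupp.single v 1) '' MinGens K I) := by
    rw [Set.image_image]
    exact Set.image_congr fun c _ => prodX_eq _
  rw [polarIdeal, himg, prodX_eq, mem_ideal_span_monomial_image]
  have hsupp : (monomial (∑ v ∈ F, Finsupp.single v 1) (1 : K)).support
      = {∑ v ∈ F, Finsupp.single v 1} := by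
    rw [support_monomial, if_neg one_ne_zero]
  rw [hsupp]
  constructor
  · intro h
    obtain ⟨si, hsi, hle⟩ := h _ (Finset.mem_singleton_self _)
    obtain ⟨c, hc, rfl⟩ := hsi
    refine ⟨c, hc, fun v hv => ?_⟩
    exact (ind_le_iff _ _).mp hle (Finset.mem_filter.mpr ⟨Finset.mem_univ _, hv⟩)
  · rintro ⟨c, hc, hsub⟩ xi hxi
    rw [Finset.mem_singleton] at hxi
    subst hxi
    refine ⟨_, ⟨c, hc, rfl⟩, (ind_le_iff _ _).mpr ?_⟩
    intro v hv
    exact hsub v (Finset.mem_filter.mp hv).2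

/-- Assume `b_n > 1`.  Then the facets of `del_{Δ(I)}(x_{n,1})` are
exactly the facets of `Δ(I)` not containing `x_{n,1}`; in particular every facet of
`del_{Δ(I)}(x_{n,1})` is a facet of `Δ(I)`, i.e. `x_{n,1}` is a shedding vertex of `Δ(I)`. -/
theorem statement11 {K : Type} [Field K] {n : ℕ} (b : Fin n → ℕ)
    (I : Ideal (MvPolynomial (Fin n) K)) (hI : ZeroDimData K b I)
    (i₀ : Fin n) (hi₀ : (i₀ : ℕ) = n - 1) (hbn : 1 < b i₀)
    (v₀ : PolVars n b) (hv₀₁ : v₀.1 = i₀) (hv₀₂ : (v₀.2 : ℕ) = 0) :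
    ∀ F : Finset (PolVars n b),
      IsFacetOf (delC (facesDelta K b I) v₀) F ↔
        (IsFacetOf (facesDelta K b I) F ∧ v₀ ∉ F) := by
  classical
  obtain ⟨_, _, hzd⟩ := hI
  -- `single i₀ (b i₀)` is a minimal generator of `I`
  have hc0mem : Finsupp.single i₀ (b i₀) ∈ MinGens K I := by
    refine ⟨(hzd i₀).2.1, ?_⟩
    intro c' hle hne
    have hc' : c' = Finsupp.single i₀ (c' i₀) := by
      ext i
      rcases eq_or_ne i i₀ with rfl | hii
      · simp
      · have h2 := Finsupp.le_def.mp hle i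
        rw [Finsupp.single_apply, if_neg (fun h => hii h.symm)] at h2
        rw [Finsupp.single_apply, if_neg (fun h => hii h.symm)]
        omega
    have hlt : c' i₀ < b i₀ := by
      have h2 := Finsupp.le_def.mp hle i₀
      rw [Finsupp.single_apply, if_pos rfl] at h2
      rcases lt_or_eq_of_le h2 with h | h
      · exact h
      · exact absurd (by rw [hc', h]) hne
    rw [hc']
    exact (hzd i₀).2.2 _ hlt
  obtain ⟨i, j⟩ := v₀
  have hii : i = i₀ := hv₀₁
  subst hii
  have hj0 : (j : ℕ) = 0 := hv₀₂
  intro F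
  constructor
  · rintro ⟨⟨hF, hvF⟩, hmax⟩
    refine ⟨⟨hF, ?_⟩, hvF⟩
    intro G hG hFG
    by_cases hvG : (⟨i, j⟩ : PolVars n b) ∈ G
    · exfalso
      -- every vertex in row `i₀` with nonzero second index already lies in `F`
      have hall : ∀ j' : Fin (b i), (⟨i, j'⟩ : PolVars n b) ∈ G := by
        intro j'
        by_cases hjj : (j' : ℕ) = 0
        · have hjeq : j' = j := Fin.ext (by omega)
          subst hjeq
          exact hvG
        · -- show `insert ⟨i, j'⟩ F` is a face of `Δ(I)`
          have hins : (insert (⟨i, j'⟩ : PolVars n b) F) ∈ facesDelta K b I := by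
            simp only [facesDelta, Set.mem_setOf_eq] at hF ⊢
            intro hmem
            obtain ⟨c, hc, hsub⟩ := (mem_polar_iff b I _).mp hmem
            by_cases hc0 : 0 < c i
            · have hv0T : (⟨i, j⟩ : PolVars n b) ∈ insert (⟨i, j'⟩ : PolVars n b) F :=
                hsub ⟨i, j⟩ (by simpa [hj0] using hc0)
              rcases Finset.mem_insert.mp hv0T with heq | hmemF
              · have : j = j' := by simpa using heq
                exact hjj (by rw [← this, hj0])
              · exact hvF hmemF
            · apply hF
              apply (mem_polar_iff b I F).mpr
              refine ⟨c, hc, fun v hv => ?_⟩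
              rcases Finset.mem_insert.mp (hsub v hv) with heq | h
              · exfalso
                subst heq
                simp only at hv
                omega
              · exact h
          have hnotin : (⟨i, j⟩ : PolVars n b) ∉ insert (⟨i, j'⟩ : PolVars n b) F := by
            intro hm
            rcases Finset.mem_insert.mp hm with heq | h
            · have : j = j' := by simpa using heq
              exact hjj (by rw [← this, hj0])
            · exact hvF h
          have hFeq : F = insert (⟨i, j'⟩ : PolVars n b) F :=
            hmax _ ⟨hins, hnotin⟩ (Finset.subset_insert _ _)
          exact hFG (hFeq ▸ Finset.mem_insert_self _ _)
      -- but then `G` contains the support of the polarization of `single i₀ (b i₀)`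
      simp only [facesDelta, Set.mem_setOf_eq] at hG
      apply hG
      apply (mem_polar_iff b I G).mpr
      refine ⟨Finsupp.single i (b i), hc0mem, ?_⟩
      rintro ⟨iv, jv⟩ hv
      simp only [Finsupp.single_apply] at hv
      by_cases hvi : i = iv
      · subst hvi
        exact hall jv
      · rw [if_neg hvi] at hv
        omega
    · exact hmax G ⟨hG, hvG⟩ hFG
  · rintro ⟨⟨hF, hmax⟩, hvF⟩
    exact ⟨⟨hF, hvF⟩, fun G hG hFG => hmax G hG.1 hFG⟩

end
end

section
/- Assume b_n > 1, and let J_1 ⊂ S' = K[x_1,…,x_{n−1}] be the monomial ideal with Mon(S'∖J_1) = {u ∈ Mon(S∖I) : x_n does not divide u}, so that dim S'/J_1 = 0 and Δ(J_1) is a simplicial complex on 𝒮 ∖ {x_{n,1},…,x_{n,b_n}}. Then del_{Δ(I)}(x_{n,1}) = x_{n,b_n} ∗ (x_{n,b_n−1} ∗ (⋯ ∗ (x_{n,2} ∗ Δ(J_1)))), the iterated cone over Δ(J_1) with apexes x_{n,2},…,x_{n,b_n}; equivalently, the facets of del_{Δ(I)}(x_{n,1}) are exactly the sets F ∪ {x_{n,2},…,x_{n,b_n}}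 with F a facet of Δ(J_1). -/
open MvPolynomial

noncomputable section

namespace St12

open Finset

variable {K : Type} [Field K] {m : ℕ}

lemma mono_up {I : Ideal (MvPolynomial (Fin m) K)} {c c' : Fin m →₀ ℕ}
    (h : monomial c (1 : K) ∈ I) (hle : c ≤ c') : monomial c' (1 : K) ∈ I := by
  have he : monomial c' (1 : K) = monomial (c' - c) 1 * monomial c 1 := by
    rw [monomial_mul, tsub_add_cancel_of_le hle, one_mul]
  rw [he]
  exact Ideal.mul_mem_left _ _ h

lemma sum_lt {c' a : Fin m →₀ ℕ} (hle : c' ≤ a) (hne : c' ≠ a) :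
    c'.sum (fun _ n => n) < a.sum (fun _ n => n) := by
  have hsub : c'.support ⊆ a.support := Finsupp.support_mono hle
  rw [Finsupp.sum_of_support_subset c' hsub _ (fun i _ => rfl), Finsupp.sum]
  obtain ⟨i, hi⟩ : ∃ i, c' i ≠ a i := by
    by_contra hc; push_neg at hc; exact hne (Finsupp.ext hc)
  have hia : i ∈ a.support := by
    rw [Finsupp.mem_support_iff]
    have := Finsupp.le_def.mp hle i
    omega
  exact Finset.sum_lt_sum (fun j _ => Finsupp.le_def.mp hle j)
    ⟨i, hia, lt_of_le_of_ne (Finsupp.le_def.mp hle i) hi⟩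

lemma exists_minGen_aux (I : Ideal (MvPolynomial (Fin m) K)) :
    ∀ N : ℕ, ∀ a : Fin m →₀ ℕ, a.sum (fun _ n => n) ≤ N → monomial a (1 : K) ∈ I →
      ∃ c ∈ MinGens K I, c ≤ a := by
  intro N
  induction N with
  | zero =>
    intro a hN h
    refine ⟨a, ⟨h, fun c' hle hne _ => ?_⟩, le_refl a⟩
    have := sum_lt hle hne
    omega
  | succ N ih =>
    intro a hN h
    by_cases hmin : ∀ c' : Fin m →₀ ℕ, c' ≤ a → c' ≠ a → monomial c' (1 : K) ∉ I
    · exact ⟨a, ⟨h, hmin⟩, le_refl a⟩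
    · push_neg at hmin
      obtain ⟨c', hle, hne, hmem⟩ := hmin
      obtain ⟨c, hc, hcc⟩ := ih c' (by have := sum_lt hle hne; omega) hmem
      exact ⟨c, hc, hcc.trans hle⟩

lemma exists_minGen {I : Ideal (MvPolynomial (Fin m) K)} {a : Fin m →₀ ℕ}
    (h : monomial a (1 : K) ∈ I) : ∃ c ∈ MinGens K I, c ≤ a :=
  exists_minGen_aux I _ a le_rfl h

lemma minGen_le_b {b : Fin m → ℕ} {I : Ideal (MvPolynomial (Fin m) K)}
    (hbmem : ∀ i, monomial (Finsupp.single i (b i)) (1 : K) ∈ I)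
    {c : Fin m →₀ ℕ} (hc : c ∈ MinGens K I) (i : Fin m) : c i ≤ b i := by
  by_contra hlt
  push_neg at hlt
  have h1 : Finsupp.single i (b i) ≤ c := Finsupp.single_le_iff.mpr hlt.le
  have h2 : Finsupp.single i (b i) ≠ c := by
    intro he
    have : (Finsupp.single i (b i)) i = c i := by rw [he]
    rw [Finsupp.single_eq_same] at this
    omega
  exact hc.2 _ h1 h2 (hbmem i)

lemma lt_b_of_not_mem {b : Fin m → ℕ} {I : Ideal (MvPolynomial (Fin m) K)}
    (hbmem : ∀ i, monomial (Finsupp.single i (b i)) (1 : K) ∈ I)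
    {a : Fin m →₀ ℕ} (ha : monomial a (1 : K) ∉ I) (i : Fin m) : a i < b i := by
  by_contra h
  push_neg at h
  exact ha (mono_up (hbmem i) (Finsupp.single_le_iff.mpr h))

lemma eS_apply {σ : Type} [DecidableEq σ] (F : Finset σ) (w : σ) :
    (∑ v ∈ F, Finsupp.single v (1 : ℕ)) w = if w ∈ F then 1 else 0 := by
  rw [Finset.sum_apply']; simp only [Finsupp.single_apply, Finset.sum_ite_eq']

lemma prod_X_F {σ : Type} [DecidableEq σ] (K : Type) [Field K] (F : Finset σ) :
    (∏ v ∈ F, (X v : MvPolynomial σ K)) = monomial (∑ v ∈ F, Finsupp.single v 1) 1 := by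
  induction F using Finset.cons_induction with
  | empty => rw [Finset.prod_empty, Finset.sum_empty, monomial_zero', C_1]
  | cons a s ha ih => rw [Finset.prod_cons, Finset.sum_cons, ih, X, monomial_mul, one_mul]

lemma eS_le_iff {σ : Type} [DecidableEq σ] (G F : Finset σ) :
    (∑ v ∈ G, Finsupp.single v (1 : ℕ)) ≤ (∑ v ∈ F, Finsupp.single v 1) ↔ G ⊆ F := by
  rw [Finsupp.le_def]
  constructor
  · intro h v hv
    have h2 := h v
    rw [eS_apply, eS_apply, if_pos hv] at h2
    by_contra hnf
    rw [if_neg hnf] at h2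
    omega
  · intro hGF v
    rw [eS_apply, eS_apply]
    split_ifs with h1 h2
    · omega
    · exact absurd (hGF h1) h2
    · omega
    · omega

/-- The set of vertices of the polarization of `x^c`. -/
def rowSet {m : ℕ} (b : Fin m → ℕ) (c : Fin m →₀ ℕ) : Finset (PolVars m b) :=
  Finset.univ.filter (fun v => (v.2 : ℕ) < c v.1)

lemma prodF_mem_polar_iff {b : Fin m → ℕ} {I : Ideal (MvPolynomial (Fin m) K)}
    (F : Finset (PolVars m b)) :
    (∏ v ∈ F, (X v : MvPolynomial (PolVars m b) K)) ∈ polarIdeal K b I ↔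
      ∃ c ∈ MinGens K I, rowSet b c ⊆ F := by
  classical
  have himg : polMon K b '' MinGens K I =
      (fun s => monomial s (1 : K)) ''
        ((fun c => ∑ v ∈ rowSet b c, Finsupp.single v 1) '' MinGens K I) := by
    rw [← Set.image_comp]
    apply Set.image_congr
    intro c _
    exact prod_X_F K _
  have hs : (monomial (∑ v ∈ F, Finsupp.single v 1) (1 : K)).support
      = {∑ v ∈ F, Finsupp.single v 1} := by
    simp [support_monomial]
  rw [polarIdeal, himg, prod_X_F, mem_ideal_span_monomial_image, hs]
  constructor
  · intro h
    obtain ⟨si, hsi, hle⟩ := h _ (Finset.mem_singleton_self _)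
    obtain ⟨c, hc, rfl⟩ := hsi
    exact ⟨c, hc, (eS_le_iff _ _).mp hle⟩
  · rintro ⟨c, hc, hsub⟩ xi hxi
    rw [Finset.mem_singleton] at hxi
    subst hxi
    exact ⟨_, ⟨c, hc, rfl⟩, (eS_le_iff _ _).mpr hsub⟩

/-- The facet of `Δ(I)` corresponding to a monomial `x^a ∉ I`. -/
def facetSet {m : ℕ} (b : Fin m → ℕ) (a : Fin m →₀ ℕ) : Finset (PolVars m b) :=
  Finset.univ.filter (fun v => (v.2 : ℕ) ≠ a v.1)

lemma mem_facetSet {b : Fin m → ℕ} {a : Fin m →₀ ℕ} (v : PolVars m b) :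
    v ∈ facetSet b a ↔ (v.2 : ℕ) ≠ a v.1 := by
  simp [facetSet]

lemma face_iff {b : Fin m → ℕ} {I : Ideal (MvPolynomial (Fin m) K)}
    (hbmem : ∀ i, monomial (Finsupp.single i (b i)) (1 : K) ∈ I)
    (F : Finset (PolVars m b)) :
    F ∈ facesDelta K b I ↔
      ∃ a : Fin m →₀ ℕ, monomial a (1 : K) ∉ I ∧ F ⊆ facetSet b a := by
  simp only [facesDelta, Set.mem_setOf_eq]
  constructor
  · intro hF
    set g : Fin m → ℕ :=
      fun i => sInf {j : ℕ | ∀ hj : j < b i, (⟨i, ⟨j, hj⟩⟩ : PolVars m b) ∉ F} with hg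
    have hne : ∀ i, {j : ℕ | ∀ hj : j < b i, (⟨i, ⟨j, hj⟩⟩ : PolVars m b) ∉ F}.Nonempty :=
      fun i => ⟨b i, fun hj => absurd hj (lt_irrefl _)⟩
    have hmemS : ∀ i, ∀ hj : g i < b i, (⟨i, ⟨g i, hj⟩⟩ : PolVars m b) ∉ F :=
      fun i => Nat.sInf_mem (hne i)
    have hlt : ∀ i, ∀ j, ∀ hj : j < b i, j < g i → (⟨i, ⟨j, hj⟩⟩ : PolVars m b) ∈ F := by
      intro i j hj hjg
      have h1 := Nat.notMem_of_lt_sInf hjg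
      simp only [Set.mem_setOf_eq, not_forall, not_not] at h1
      obtain ⟨hj', hmem⟩ := h1
      exact hmem
    refine ⟨Finsupp.equivFunOnFinite.symm g, ?_, ?_⟩
    · intro hmem
      obtain ⟨c, hc, hle⟩ := exists_minGen hmem
      apply hF
      rw [prodF_mem_polar_iff]
      refine ⟨c, hc, ?_⟩
      rintro ⟨i, j⟩ hv
      rw [rowSet, Finset.mem_filter] at hv
      have hj : (j : ℕ) < c i := hv.2
      have hgi : (j : ℕ) < g i := lt_of_lt_of_le hj (Finsupp.le_def.mp hle i)
      exact hlt i j j.isLt hgi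
    · rintro ⟨i, j⟩ hv
      rw [mem_facetSet]
      intro heq
      have hj : (j : ℕ) = g i := heq
      have hb : g i < b i := hj ▸ j.isLt
      have : (⟨i, ⟨g i, hb⟩⟩ : PolVars m b) = ⟨i, j⟩ := by
        congr 1
        exact Fin.ext hj.symm
      exact hmemS i hb (this ▸ hv)
  · rintro ⟨a, haI, hsub⟩ hmem
    rw [prodF_mem_polar_iff] at hmem
    obtain ⟨c, hc, hrow⟩ := hmem
    apply haI
    apply mono_up hc.1
    rw [Finsupp.le_def]
    intro i
    by_contra hlt
    push_neg at hlt
    have hib : a i < b i := lt_of_lt_of_le hlt (minGen_le_b hbmem hc i)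
    have hv : (⟨i, ⟨a i, hib⟩⟩ : PolVars m b) ∈ rowSet b c := by
      rw [rowSet, Finset.mem_filter]
      exact ⟨Finset.mem_univ _, hlt⟩
    have h2 := hsub (hrow hv)
    rw [mem_facetSet] at h2
    exact h2 rfl

lemma facet_subset {b : Fin m → ℕ} {a a' : Fin m →₀ ℕ} (hb' : ∀ i, a' i < b i)
    (h : facetSet b a ⊆ facetSet b a') : ∀ i, a' i = a i := by
  intro i
  by_contra hne
  have hv : (⟨i, ⟨a' i, hb' i⟩⟩ : PolVars m b) ∈ facetSet b a := by
    rw [mem_facetSet]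
    exact hne
  have h2 := h hv
  rw [mem_facetSet] at h2
  exact h2 rfl

lemma facetSet_congr {b : Fin m → ℕ} {a a' : Fin m →₀ ℕ} (h : ∀ i, a i = a' i) :
    facetSet b a = facetSet b a' := by
  ext v
  rw [mem_facetSet, mem_facetSet, h]

lemma facet_iff {b : Fin m → ℕ} {I : Ideal (MvPolynomial (Fin m) K)}
    (hbmem : ∀ i, monomial (Finsupp.single i (b i)) (1 : K) ∈ I)
    (F : Finset (PolVars m b)) :
    IsFacetOf (facesDelta K b I) F ↔
      ∃ a : Fin m →₀ ℕ, monomial a (1 : K) ∉ I ∧ F = facetSet b a := by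
  constructor
  · rintro ⟨hF, hmax⟩
    obtain ⟨a, haI, hsub⟩ := (face_iff hbmem F).mp hF
    have hfa : facetSet b a ∈ facesDelta K b I := (face_iff hbmem _).mpr ⟨a, haI, subset_rfl⟩
    exact ⟨a, haI, hmax _ hfa hsub⟩
  · rintro ⟨a, haI, rfl⟩
    refine ⟨(face_iff hbmem _).mpr ⟨a, haI, subset_rfl⟩, ?_⟩
    intro G hG hsub
    obtain ⟨a', ha'I, hsub'⟩ := (face_iff hbmem G).mp hG
    have h2 := facet_subset (fun i => lt_b_of_not_mem hbmem ha'I i) (hsub.trans hsub')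
    have h3 : facetSet b a' = facetSet b a := facetSet_congr h2
    rw [h3] at hsub'
    exact Finset.Subset.antisymm hsub hsub'

lemma del_face_iff {b : Fin m → ℕ} {I : Ideal (MvPolynomial (Fin m) K)}
    (hbmem : ∀ i, monomial (Finsupp.single i (b i)) (1 : K) ∈ I)
    (v₀ : PolVars m b) (hv₀ : (v₀.2 : ℕ) = 0) (G : Finset (PolVars m b)) :
    G ∈ delC (facesDelta K b I) v₀ ↔
      ∃ a : Fin m →₀ ℕ, monomial a (1 : K) ∉ I ∧ a v₀.1 = 0 ∧ G ⊆ facetSet b a := by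
  simp only [delC, Set.mem_setOf_eq]
  constructor
  · rintro ⟨hG, hv₀G⟩
    obtain ⟨a, haI, hsub⟩ := (face_iff hbmem G).mp hG
    have herase_le : a.erase v₀.1 ≤ a := by
      rw [Finsupp.le_def]
      intro j
      by_cases h : j = v₀.1
      · rw [h, Finsupp.erase_same]
        exact Nat.zero_le _
      · rw [Finsupp.erase_ne h]
    refine ⟨a.erase v₀.1, ?_, Finsupp.erase_same, ?_⟩
    · intro hmem
      exact haI (mono_up hmem herase_le)
    · intro v hvG
      rw [mem_facetSet]
      by_cases hv1 : v.1 = v₀.1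
      · have hz : (Finsupp.erase v₀.1 a) v.1 = 0 := by rw [hv1, Finsupp.erase_same]
        rw [hz]
        intro h0
        apply hv₀G
        have hvv : v = v₀ := by
          obtain ⟨i, j⟩ := v
          obtain ⟨i₀, j₀⟩ := v₀
          simp only at hv1
          subst hv1
          congr 1
          exact Fin.ext (h0.trans hv₀.symm)
        rwa [hvv] at hvG
      · rw [Finsupp.erase_ne hv1]
        have h2 := hsub hvG
        rw [mem_facetSet] at h2
        exact h2
  · rintro ⟨a, haI, ha0, hsub⟩
    refine ⟨(face_iff hbmem G).mpr ⟨a, haI, hsub⟩, fun hv₀G => ?_⟩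
    have h2 := hsub hv₀G
    rw [mem_facetSet] at h2
    exact h2 (hv₀.trans ha0.symm)

lemma del_facet_iff {b : Fin m → ℕ} {I : Ideal (MvPolynomial (Fin m) K)}
    (hbmem : ∀ i, monomial (Finsupp.single i (b i)) (1 : K) ∈ I)
    (v₀ : PolVars m b) (hv₀ : (v₀.2 : ℕ) = 0) (F : Finset (PolVars m b)) :
    IsFacetOf (delC (facesDelta K b I) v₀) F ↔
      ∃ a : Fin m →₀ ℕ, monomial a (1 : K) ∉ I ∧ a v₀.1 = 0 ∧ F = facetSet b a := by
  constructor
  · rintro ⟨hF, hmax⟩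
    obtain ⟨a, haI, ha0, hsub⟩ := (del_face_iff hbmem v₀ hv₀ F).mp hF
    have hfa : facetSet b a ∈ delC (facesDelta K b I) v₀ :=
      (del_face_iff hbmem v₀ hv₀ _).mpr ⟨a, haI, ha0, subset_rfl⟩
    exact ⟨a, haI, ha0, hmax _ hfa hsub⟩
  · rintro ⟨a, haI, ha0, rfl⟩
    refine ⟨(del_face_iff hbmem v₀ hv₀ _).mpr ⟨a, haI, ha0, subset_rfl⟩, ?_⟩
    intro G hG hsub
    obtain ⟨a', ha'I, _, hsub'⟩ := (del_face_iff hbmem v₀ hv₀ G).mp hG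
    have h2 := facet_subset (fun i => lt_b_of_not_mem hbmem ha'I i) (hsub.trans hsub')
    have h3 : facetSet b a' = facetSet b a := facetSet_congr h2
    rw [h3] at hsub'
    exact Finset.Subset.antisymm hsub hsub'

lemma setEq {n : ℕ} {b : Fin (n + 1) → ℕ} {b' : Fin n → ℕ}
    (hb' : ∀ i : Fin n, b' i = b i.castSucc) (c : Fin n →₀ ℕ) :
    facetSet b (Finsupp.embDomain ⟨Fin.castSucc, Fin.castSucc_injective n⟩ c) =
      (facetSet b' c).image (fun v => (⟨v.1.castSucc, Fin.cast (hb' v.1) v.2⟩ :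
            PolVars (n + 1) b))
        ∪ Finset.univ.filter
            (fun v : PolVars (n + 1) b => v.1 = Fin.last n ∧ 1 ≤ (v.2 : ℕ)) := by
  have hlast : Finsupp.embDomain ⟨Fin.castSucc, Fin.castSucc_injective n⟩ c (Fin.last n) = 0 := by
    apply Finsupp.embDomain_notin_range
    simp only [Set.mem_range, not_exists]
    intro i h
    exact absurd h (Fin.ne_of_lt (Fin.castSucc_lt_last i))
  ext ⟨i, j⟩
  rw [Finset.mem_union, mem_facetSet, Finset.mem_image, Finset.mem_filter]
  induction i using Fin.lastCases with
  | last =>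
    rw [hlast]
    constructor
    · intro h
      exact Or.inr ⟨Finset.mem_univ _, rfl, by omega⟩
    · rintro (⟨w, hw, heq⟩ | ⟨_, _, h1⟩)
      · exfalso
        have h1 := congrArg (fun p : PolVars (n + 1) b => p.1) heq
        exact absurd h1 (Fin.ne_of_lt (Fin.castSucc_lt_last w.1))
      · omega
  | cast i' =>
    have hemb : Finsupp.embDomain ⟨Fin.castSucc, Fin.castSucc_injective n⟩ c i'.castSucc = c i' :=
      Finsupp.embDomain_apply_self _ _ _
    rw [hemb]
    constructor
    · intro h
      left
      refine ⟨⟨i', Fin.cast (hb' i').symm j⟩, ?_, rfl⟩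
      rw [mem_facetSet]
      exact h
    · rintro (⟨w, hw, heq⟩ | ⟨_, hlast', _⟩)
      · have h3 : (j : ℕ) = (w.2 : ℕ) :=
          (congrArg (fun p : PolVars (n + 1) b => (p.2 : ℕ)) heq).symm
        have h1 : w.1.castSucc = i'.castSucc := congrArg (fun p : PolVars (n + 1) b => p.1) heq
        have hw1 : w.1 = i' := Fin.castSucc_injective n h1
        rw [mem_facetSet] at hw
        rw [h3, ← hw1]
        exact hw
      · exact absurd hlast' (Fin.ne_of_lt (Fin.castSucc_lt_last i'))

end St12
/-- Assume `b_n > 1`, and let `J₁ ⊂ S' = K[x_1,…,x_{n−1}]` be the monomial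
ideal with `Mon(S'∖J₁) = {u ∈ Mon(S∖I) : x_n ∤ u}` (so `dim S'/J₁ = 0` and `Δ(J₁)` is a
simplicial complex on `𝒮 ∖ {x_{n,1},…,x_{n,b_n}}`).  Then
`del_{Δ(I)}(x_{n,1}) = x_{n,b_n} ∗ (⋯ ∗ (x_{n,2} ∗ Δ(J₁)))`; equivalently, the facets of
`del_{Δ(I)}(x_{n,1})` are exactly the sets `F ∪ {x_{n,2},…,x_{n,b_n}}` with `F` a facet
of `Δ(J₁)`.  (We formalize this with `n+1` variables, the distinguished one being the
last, and `Δ(J₁)` on the vertex set `PolVars n b'` embedded into `PolVars (n+1) b`.) -/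
theorem statement12 {K : Type} [Field K] {n : ℕ} (b : Fin (n + 1) → ℕ)
    (I : Ideal (MvPolynomial (Fin (n + 1)) K)) (hI : ZeroDimData K b I)
    (hbn : 1 < b (Fin.last n))
    (v₀ : PolVars (n + 1) b) (hv₀₁ : v₀.1 = Fin.last n) (hv₀₂ : (v₀.2 : ℕ) = 0)
    (b' : Fin n → ℕ) (hb' : ∀ i : Fin n, b' i = b i.castSucc)
    (J₁ : Ideal (MvPolynomial (Fin n) K)) (hJ₁ : ZeroDimData K b' J₁)
    (hJ₁Mon : ∀ c : Fin n →₀ ℕ, (monomial c (1 : K)) ∉ J₁ ↔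
      (monomial (Finsupp.embDomain ⟨Fin.castSucc, Fin.castSucc_injective n⟩ c) (1 : K)) ∉ I) :
    ∀ F : Finset (PolVars (n + 1) b),
      IsFacetOf (delC (facesDelta K b I) v₀) F ↔
        ∃ G : Finset (PolVars n b'), IsFacetOf (facesDelta K b' J₁) G ∧
          F = G.image (fun v => (⟨v.1.castSucc, Fin.cast (hb' v.1) v.2⟩ :
                PolVars (n + 1) b))
              ∪ Finset.univ.filter
                  (fun v : PolVars (n + 1) b => v.1 = Fin.last n ∧ 1 ≤ (v.2 : ℕ)) := by
  intro F
  have hbmem : ∀ i, monomial (Finsupp.single i (b i)) (1 : K) ∈ I := fun i => (hI.2.2 i).2.1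
  have hbmem' : ∀ i, monomial (Finsupp.single i (b' i)) (1 : K) ∈ J₁ := fun i => (hJ₁.2.2 i).2.1
  have hnr : (Fin.last n) ∉ Set.range (⟨Fin.castSucc, Fin.castSucc_injective n⟩ : Fin n ↪ Fin (n+1)) := by
    simp only [Set.mem_range, not_exists]
    intro i h
    exact absurd h (Fin.ne_of_lt (Fin.castSucc_lt_last i))
  constructor
  · intro hF
    obtain ⟨a, haI, ha0, rfl⟩ := (St12.del_facet_iff hbmem v₀ hv₀₂ F).mp hF
    rw [hv₀₁] at ha0
    set c : Fin n →₀ ℕ := Finsupp.equivFunOnFinite.symm (fun i => a i.castSucc) with hc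
    have hemb : Finsupp.embDomain ⟨Fin.castSucc, Fin.castSucc_injective n⟩ c = a := by
      ext j
      induction j using Fin.lastCases with
      | last =>
        rw [Finsupp.embDomain_notin_range _ _ _ hnr]
        exact ha0.symm
      | cast i => exact Finsupp.embDomain_apply_self _ c i
    have hcJ : monomial c (1 : K) ∉ J₁ := (hJ₁Mon c).mpr (by rw [hemb]; exact haI)
    refine ⟨St12.facetSet b' c, (St12.facet_iff hbmem' _).mpr ⟨c, hcJ, rfl⟩, ?_⟩
    rw [← hemb]
    exact St12.setEq hb' c
  · rintro ⟨G, hG, rfl⟩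
    obtain ⟨c, hcJ, rfl⟩ := (St12.facet_iff hbmem' G).mp hG
    have haI : monomial (Finsupp.embDomain ⟨Fin.castSucc, Fin.castSucc_injective n⟩ c) (1 : K) ∉ I :=
      (hJ₁Mon c).mp hcJ
    apply (St12.del_facet_iff hbmem v₀ hv₀₂ _).mpr
    refine ⟨_, haI, ?_, (St12.setEq hb' c).symm⟩
    rw [hv₀₁]
    exact Finsupp.embDomain_notin_range _ _ _ hnr

end
end

section
/- Assume b_n > 1, and let J_2 ⊂ S be the monomial ideal with Mon(S∖J_2) = {u/x_n : u ∈ Mon(S∖I), x_n divides u}, so that dim S/J_2 = 0 and Δ(J_2) is a simplicial complex on 𝒮 ∖ {x_{n,b_n}}. Then the map sending a face F of link_{Δ(I)}(x_{n,1}) to the set obtained from F by replacing each vertex x_{n,j} ∈ F (necessarily j ≥ 2) by x_{n,j−1} is an isomorphism of simplicial complexes from link_{Δ(I)}(x_{n,1}) onto Δ(J_2). -/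
open MvPolynomial

noncomputable section

section Aux

variable {K : Type} [Field K] {m : ℕ} {b : Fin m → ℕ}

lemma aux_sigma_ext {v w : PolVars m b} (h1 : v.1 = w.1) (h2 : (v.2 : ℕ) = (w.2 : ℕ)) :
    v = w := by
  obtain ⟨i, j⟩ := v
  obtain ⟨i', j'⟩ := w
  dsimp at h1 h2
  subst h1
  exact congrArg (Sigma.mk i) (Fin.ext h2)

lemma aux_prodX {σ : Type} [DecidableEq σ] (F : Finset σ) :
    (∏ v ∈ F, (X v : MvPolynomial σ K)) =
      monomial (∑ v ∈ F, Finsupp.single v 1) 1 := by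
  classical
  induction F using Finset.induction with
  | empty => simp
  | insert _ _ h ih =>
    rw [Finset.prod_insert h, Finset.sum_insert h, ih]
    have hX : ∀ v : σ, (X v : MvPolynomial σ K) = monomial (Finsupp.single v 1) 1 := fun _ => rfl
    rw [hX, monomial_mul, mul_one]

lemma aux_ind_apply {σ : Type} [DecidableEq σ] (F : Finset σ) (w : σ) :
    (∑ v ∈ F, Finsupp.single v (1 : ℕ)) w = if w ∈ F then 1 else 0 := by
  rw [Finset.sum_apply']
  simp [Finsupp.single_apply]

lemma aux_ind_le {σ : Type} [DecidableEq σ] (S F : Finset σ) :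
    (∑ v ∈ S, Finsupp.single v (1 : ℕ)) ≤ (∑ v ∈ F, Finsupp.single v 1) ↔ S ⊆ F := by
  constructor
  · intro h v hv
    have h2 := (Finsupp.le_def.mp h) v
    rw [aux_ind_apply, aux_ind_apply, if_pos hv] at h2
    by_contra hF
    rw [if_neg hF] at h2
    omega
  · intro h
    rw [Finsupp.le_def]
    intro v
    rw [aux_ind_apply, aux_ind_apply]
    split_ifs with h1 h2
    · exact le_refl _
    · exact absurd (h h1) h2
    · omega
    · exact le_refl _

lemma aux_mem_span {σ : Type} (A : Set (σ →₀ ℕ)) (e : σ →₀ ℕ) :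
    monomial e (1 : K) ∈ Ideal.span ((fun c => monomial c (1 : K)) '' A) ↔
      ∃ a ∈ A, a ≤ e := by
  classical
  rw [mem_ideal_span_monomial_image]
  constructor
  · intro h
    refine h e ?_
    rw [mem_support_iff, coeff_monomial, if_pos rfl]
    exact one_ne_zero
  · rintro ⟨a, ha, hle⟩ xi hxi
    rw [mem_support_iff, coeff_monomial] at hxi
    split_ifs at hxi with he
    · exact he ▸ ⟨a, ha, hle⟩
    · exact absurd rfl hxi

lemma aux_mem_up {σ : Type} {J : Ideal (MvPolynomial σ K)} {d e : σ →₀ ℕ}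
    (hd : monomial d (1 : K) ∈ J) (hde : d ≤ e) : monomial e (1 : K) ∈ J := by
  have h : monomial e (1 : K) = monomial (e - d) (1 : K) * monomial d (1 : K) := by
    rw [monomial_mul, one_mul, tsub_add_cancel_of_le hde]
  rw [h]
  exact J.mul_mem_left _ hd

lemma aux_sum_lt {c d : Fin m →₀ ℕ} (hle : c ≤ d) (hne : c ≠ d) :
    ∑ i, c i < ∑ i, d i := by
  obtain ⟨i, hi⟩ : ∃ i, c i ≠ d i := by
    by_contra h
    push_neg at h
    exact hne (Finsupp.ext h)
  exact Finset.sum_lt_sum (fun i _ => (Finsupp.le_def.mp hle) i)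
    ⟨i, Finset.mem_univ i, lt_of_le_of_ne ((Finsupp.le_def.mp hle) i) hi⟩

lemma aux_minimalize {J : Ideal (MvPolynomial (Fin m) K)} :
    ∀ N (d : Fin m →₀ ℕ), (∑ i, d i) ≤ N → monomial d (1 : K) ∈ J →
      ∃ e ∈ MinGens K J, e ≤ d := by
  intro N
  induction N with
  | zero =>
    intro d hN hd
    refine ⟨d, ⟨hd, fun c' hle hne hc' => ?_⟩, le_refl d⟩
    have := aux_sum_lt hle hne
    omega
  | succ N ih =>
    intro d hN hd
    by_cases hmin : ∀ c' : Fin m →₀ ℕ, c' ≤ d → c' ≠ d → monomial c' (1 : K) ∉ J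
    · exact ⟨d, ⟨hd, hmin⟩, le_refl d⟩
    · push_neg at hmin
      obtain ⟨c', hle, hne, hc'⟩ := hmin
      have hlt := aux_sum_lt hle hne
      obtain ⟨e, he, hele⟩ := ih c' (by omega) hc'
      exact ⟨e, he, hele.trans hle⟩

lemma aux_mem_polar_iff (J : Ideal (MvPolynomial (Fin m) K)) (F : Finset (PolVars m b)) :
    (∏ v ∈ F, (X v : MvPolynomial (PolVars m b) K)) ∈ polarIdeal K b J ↔
      ∃ d ∈ MinGens K J, ∀ v : PolVars m b, (v.2 : ℕ) < d v.1 → v ∈ F := by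
  classical
  have himg : polMon K b '' MinGens K J =
      (fun c => monomial c (1 : K)) ''
        ((fun d : Fin m →₀ ℕ =>
            ∑ v ∈ Finset.univ.filter (fun v : PolVars m b => (v.2 : ℕ) < d v.1),
              Finsupp.single v 1) '' MinGens K J) := by
    rw [Set.image_image]
    exact Set.image_congr fun d _ => aux_prodX _
  rw [polarIdeal, himg, aux_prodX, aux_mem_span]
  constructor
  · rintro ⟨a, ⟨d, hd, rfl⟩, hle⟩
    refine ⟨d, hd, fun v hv => ?_⟩
    have h2 := (aux_ind_le _ _).mp hle (Finset.mem_filter.mpr ⟨Finset.mem_univ v, hv⟩)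
    exact h2
  · rintro ⟨d, hd, hS⟩
    refine ⟨_, ⟨d, hd, rfl⟩, (aux_ind_le _ _).mpr ?_⟩
    intro v hv
    exact hS v (Finset.mem_filter.mp hv).2

lemma aux_mem_polar_of {J : Ideal (MvPolynomial (Fin m) K)} {F : Finset (PolVars m b)}
    {d : Fin m →₀ ℕ} (hd : monomial d (1 : K) ∈ J)
    (hS : ∀ v : PolVars m b, (v.2 : ℕ) < d v.1 → v ∈ F) :
    (∏ v ∈ F, (X v : MvPolynomial (PolVars m b) K)) ∈ polarIdeal K b J := by
  obtain ⟨e, he, hed⟩ := aux_minimalize (∑ i, d i) d le_rfl hd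
  exact (aux_mem_polar_iff J F).mpr
    ⟨e, he, fun v hv => hS v (lt_of_lt_of_le hv ((Finsupp.le_def.mp hed) v.1))⟩

lemma aux_face_anti {J : Ideal (MvPolynomial (Fin m) K)} {F G : Finset (PolVars m b)}
    (hFG : F ⊆ G)
    (hmem : (∏ v ∈ F, (X v : MvPolynomial (PolVars m b) K)) ∈ polarIdeal K b J) :
    (∏ v ∈ G, (X v : MvPolynomial (PolVars m b) K)) ∈ polarIdeal K b J := by
  obtain ⟨d, hd, hS⟩ := (aux_mem_polar_iff J F).mp hmem
  exact aux_mem_polar_of hd.1 fun v hv => hFG (hS v hv)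

lemma aux_minGen_le {I : Ideal (MvPolynomial (Fin m) K)}
    (hbI : ∀ i : Fin m, monomial (Finsupp.single i (b i)) (1 : K) ∈ I)
    {d : Fin m →₀ ℕ} (hd : d ∈ MinGens K I) (i : Fin m) : d i ≤ b i := by
  by_contra h
  push_neg at h
  set c : Fin m →₀ ℕ := d - Finsupp.single i (d i - b i) with hc
  have hci : c i = b i := by
    rw [hc, Finsupp.tsub_apply, Finsupp.single_eq_same]
    omega
  have hcle : c ≤ d := tsub_le_self
  have hcne : c ≠ d := fun he => by rw [he] at hci; omega
  refine hd.2 c hcle hcne (aux_mem_up (hbI i) ?_)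
  rw [Finsupp.le_def]
  intro j
  rcases eq_or_ne i j with rfl | hij
  · rw [Finsupp.single_eq_same, hci]
  · rw [Finsupp.single_eq_of_ne' hij]
    exact Nat.zero_le _

lemma aux_shiftDown_fst (i₀ : Fin m) (v : PolVars m b) : (shiftDown i₀ v).1 = v.1 := rfl

lemma aux_shiftDown_val (i₀ : Fin m) (v : PolVars m b) :
    ((shiftDown i₀ v).2 : ℕ) = (v.2 : ℕ) - (if v.1 = i₀ then 1 else 0) := rfl

lemma aux_shiftDown_eq_self {i₀ : Fin m} {v : PolVars m b} (h : v.1 ≠ i₀) :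
    shiftDown i₀ v = v := by
  refine aux_sigma_ext rfl ?_
  rw [aux_shiftDown_val, if_neg h]
  exact Nat.sub_zero _

lemma aux_shiftDown_inj (i₀ : Fin m) {u v : PolVars m b}
    (hu : u.1 = i₀ → (u.2 : ℕ) ≠ 0) (hv : v.1 = i₀ → (v.2 : ℕ) ≠ 0)
    (h : shiftDown i₀ u = shiftDown i₀ v) : u = v := by
  have h1 : u.1 = v.1 := by
    have h0 := congrArg Sigma.fst h
    exact h0
  have h2 : (u.2 : ℕ) - (if u.1 = i₀ then 1 else 0)
      = (v.2 : ℕ) - (if v.1 = i₀ then 1 else 0) := by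
    have h3 := congrArg (fun w : PolVars m b => (w.2 : ℕ)) h
    exact h3
  refine aux_sigma_ext h1 ?_
  by_cases hui : u.1 = i₀
  · have hvi : v.1 = i₀ := h1 ▸ hui
    rw [if_pos hui, if_pos hvi] at h2
    have hu0 := hu hui
    have hv0 := hv hvi
    omega
  · have hvi : v.1 ≠ i₀ := h1 ▸ hui
    rw [if_neg hui, if_neg hvi] at h2
    omega

lemma aux_forward {I J₂ : Ideal (MvPolynomial (Fin m) K)} {i₀ : Fin m}
    (hJ₂Mon : ∀ c : Fin m →₀ ℕ, (monomial c (1 : K)) ∉ J₂ ↔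
      (monomial (c + Finsupp.single i₀ 1) (1 : K)) ∉ I)
    {v₀ : PolVars m b} (hv₀₁ : v₀.1 = i₀) (hv₀₂ : (v₀.2 : ℕ) = 0)
    {F : Finset (PolVars m b)} (hF0 : ∀ v ∈ F, v.1 = i₀ → (v.2 : ℕ) ≠ 0)
    (hface : (∏ v ∈ insert v₀ F, (X v : MvPolynomial (PolVars m b) K)) ∉ polarIdeal K b I) :
    (∏ v ∈ F.image (shiftDown i₀), (X v : MvPolynomial (PolVars m b) K))
      ∉ polarIdeal K b J₂ := by
  intro hmem
  obtain ⟨c, hc, hSc⟩ := (aux_mem_polar_iff J₂ _).mp hmem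
  have hdI : monomial (c + Finsupp.single i₀ 1) (1 : K) ∈ I := by
    by_contra h
    exact (hJ₂Mon c).mpr h hc.1
  apply hface
  apply aux_mem_polar_of hdI
  intro v hv
  rw [Finsupp.add_apply] at hv
  by_cases hvi : v.1 = i₀
  · have hs1 : (Finsupp.single i₀ 1) v.1 = 1 := by rw [hvi, Finsupp.single_eq_same]
    rw [hs1] at hv
    by_cases hv0 : (v.2 : ℕ) = 0
    · exact Finset.mem_insert.mpr (Or.inl (aux_sigma_ext (hvi.trans hv₀₁.symm)
        (hv0.trans hv₀₂.symm)))
    · have hlt : (v.2 : ℕ) - 1 < c v.1 := by omega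
      have hb1 : (v.2 : ℕ) - 1 < b v.1 := lt_of_le_of_lt (Nat.sub_le _ _) v.2.isLt
      obtain ⟨u, hu, huw⟩ :=
        Finset.mem_image.mp (hSc ⟨v.1, ⟨(v.2 : ℕ) - 1, hb1⟩⟩ hlt)
      have hu1 : u.1 = v.1 := by
        have h0 := congrArg Sigma.fst huw
        exact h0
      have hu0 : (u.2 : ℕ) ≠ 0 := hF0 u hu (hu1.trans hvi)
      have h3 : (u.2 : ℕ) - (if u.1 = i₀ then 1 else 0) = (v.2 : ℕ) - 1 := by
        have h4 := congrArg (fun x : PolVars m b => (x.2 : ℕ)) huw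
        exact h4
      rw [if_pos (hu1.trans hvi)] at h3
      have huv : u = v := aux_sigma_ext hu1 (by omega)
      exact Finset.mem_insert.mpr (Or.inr (huv ▸ hu))
  · have hs1 : (Finsupp.single i₀ 1) v.1 = 0 :=
      Finsupp.single_eq_of_ne' (fun hh => hvi hh.symm)
    rw [hs1] at hv
    have hvc : (v.2 : ℕ) < c v.1 := by omega
    obtain ⟨u, hu, huw⟩ := Finset.mem_image.mp (hSc v hvc)
    have hu1 : u.1 = v.1 := by
      have h0 := congrArg Sigma.fst huw
      exact h0
    have huv : u = v := by
      rw [← huw, aux_shiftDown_eq_self (fun hh => hvi (hu1.symm.trans hh))]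
    exact Finset.mem_insert.mpr (Or.inr (huv ▸ hu))

lemma aux_backward {I J₂ : Ideal (MvPolynomial (Fin m) K)} {i₀ : Fin m}
    (hbI : ∀ i : Fin m, monomial (Finsupp.single i (b i)) (1 : K) ∈ I)
    (hJ₂Mon : ∀ c : Fin m →₀ ℕ, (monomial c (1 : K)) ∉ J₂ ↔
      (monomial (c + Finsupp.single i₀ 1) (1 : K)) ∉ I)
    {v₀ : PolVars m b} (hv₀₁ : v₀.1 = i₀) (hv₀₂ : (v₀.2 : ℕ) = 0)
    {F : Finset (PolVars m b)} (hF0 : ∀ v ∈ F, v.1 = i₀ → (v.2 : ℕ) ≠ 0)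
    (hG : (∏ v ∈ F.image (shiftDown i₀), (X v : MvPolynomial (PolVars m b) K))
      ∉ polarIdeal K b J₂) :
    (∏ v ∈ insert v₀ F, (X v : MvPolynomial (PolVars m b) K)) ∉ polarIdeal K b I := by
  intro hmem
  obtain ⟨d, hd, hSd⟩ := (aux_mem_polar_iff I _).mp hmem
  have hdb : ∀ i, d i ≤ b i := fun i => aux_minGen_le hbI hd i
  set c : Fin m →₀ ℕ := d - Finsupp.single i₀ 1 with hc
  have hci : c i₀ = d i₀ - 1 := by rw [hc, Finsupp.tsub_apply, Finsupp.single_eq_same]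
  have hcj : ∀ j, j ≠ i₀ → c j = d j := by
    intro j hj
    rw [hc, Finsupp.tsub_apply, Finsupp.single_eq_of_ne' (fun hh => hj hh.symm), Nat.sub_zero]
  have hcI : monomial (c + Finsupp.single i₀ 1) (1 : K) ∈ I := by
    apply aux_mem_up hd.1
    rw [Finsupp.le_def]
    intro j
    rw [Finsupp.add_apply]
    rcases eq_or_ne j i₀ with rfl | hj
    · rw [hci, Finsupp.single_eq_same]; omega
    · rw [hcj j hj, Finsupp.single_eq_of_ne' (fun hh => hj hh.symm)]
      omega
  have hcJ : monomial c (1 : K) ∈ J₂ := by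
    by_contra h
    exact (hJ₂Mon c).mp h hcI
  apply hG
  apply aux_mem_polar_of hcJ
  intro v hv
  by_cases hvi : v.1 = i₀
  · have hcv : c v.1 = d i₀ - 1 := by rw [hvi, hci]
    rw [hcv] at hv
    have hvd : (v.2 : ℕ) + 1 < d i₀ := by omega
    have hdv : d v.1 = d i₀ := by rw [hvi]
    have hvb : (v.2 : ℕ) + 1 < b v.1 := by
      have hbb : b v.1 = b i₀ := by rw [hvi]
      have := hdb i₀
      omega
    have hwd : (v.2 : ℕ) + 1 < d v.1 := by omega
    have hwmem : (⟨v.1, ⟨(v.2 : ℕ) + 1, hvb⟩⟩ : PolVars m b) ∈ insert v₀ F := hSd _ hwd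
    have hwne : (⟨v.1, ⟨(v.2 : ℕ) + 1, hvb⟩⟩ : PolVars m b) ≠ v₀ := by
      intro he
      have h6 := congrArg (fun x : PolVars m b => (x.2 : ℕ)) he
      have h5 : (v.2 : ℕ) + 1 = (v₀.2 : ℕ) := h6
      omega
    have hwF : (⟨v.1, ⟨(v.2 : ℕ) + 1, hvb⟩⟩ : PolVars m b) ∈ F :=
      (Finset.mem_insert.mp hwmem).resolve_left hwne
    refine Finset.mem_image.mpr ⟨_, hwF, ?_⟩
    refine aux_sigma_ext rfl ?_
    show (v.2 : ℕ) + 1 - (if v.1 = i₀ then 1 else 0) = (v.2 : ℕ)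
    rw [if_pos hvi]
    omega
  · have hvd : (v.2 : ℕ) < d v.1 := by rw [hcj v.1 hvi] at hv; exact hv
    have hvmem : v ∈ insert v₀ F := hSd v hvd
    have hvne : v ≠ v₀ := by
      intro he
      exact hvi (by rw [he]; exact hv₀₁)
    have hvF : v ∈ F := (Finset.mem_insert.mp hvmem).resolve_left hvne
    exact Finset.mem_image.mpr ⟨v, hvF, aux_shiftDown_eq_self hvi⟩

end Aux

/-- Assume `b_n > 1`, and let `J₂ ⊂ S` be the monomial ideal with
`Mon(S∖J₂) = {u/x_n : u ∈ Mon(S∖I), x_n ∣ u}` (so `dim S/J₂ = 0` and `Δ(J₂)` is a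
simplicial complex on `𝒮 ∖ {x_{n,b_n}}`).  Then the map sending a face `F` of
`link_{Δ(I)}(x_{n,1})` to the set obtained from `F` by replacing each vertex
`x_{n,j} ∈ F` (necessarily `j ≥ 2`) by `x_{n,j−1}` is an isomorphism of simplicial
complexes from `link_{Δ(I)}(x_{n,1})` onto `Δ(J₂)`: it is injective on the vertices
involved and a bijection from the faces of the link onto the faces of `Δ(J₂)`
(the subsets of `𝒮 ∖ {x_{n,b_n}}` whose monomial avoids `J₂^℘`). -/
theorem statement13 {K : Type} [Field K] {n : ℕ} (b : Fin n → ℕ)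
    (I : Ideal (MvPolynomial (Fin n) K)) (hI : ZeroDimData K b I)
    (i₀ : Fin n) (hi₀ : (i₀ : ℕ) = n - 1) (hbn : 1 < b i₀)
    (v₀ : PolVars n b) (hv₀₁ : v₀.1 = i₀) (hv₀₂ : (v₀.2 : ℕ) = 0)
    (J₂ : Ideal (MvPolynomial (Fin n) K)) (hJ₂mon : IsMonomialIdeal J₂)
    (hJ₂Mon : ∀ c : Fin n →₀ ℕ, (monomial c (1 : K)) ∉ J₂ ↔
      (monomial (c + Finsupp.single i₀ 1) (1 : K)) ∉ I) :
    Set.BijOn (fun F : Finset (PolVars n b) => F.image (shiftDown i₀))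
      (linkC (facesDelta K b I) v₀)
      {F : Finset (PolVars n b) | (∀ v ∈ F, v.1 = i₀ → (v.2 : ℕ) + 1 < b i₀) ∧
        (∏ v ∈ F, (X v : MvPolynomial (PolVars n b) K)) ∉ polarIdeal K b J₂} ∧
    Set.InjOn (shiftDown i₀)
      {v : PolVars n b | ∃ F ∈ linkC (facesDelta K b I) v₀, v ∈ F} := by
  classical
  obtain ⟨hImonI, hItop, hbdat⟩ := hI
  have hbI : ∀ i : Fin n, monomial (Finsupp.single i (b i)) (1 : K) ∈ I :=
    fun i => (hbdat i).2.1
  have hv₀mem : ∀ w : PolVars n b, w.1 = i₀ → (w.2 : ℕ) = 0 → w = v₀ :=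
    fun w h1 h2 => aux_sigma_ext (h1.trans hv₀₁.symm) (h2.trans hv₀₂.symm)
  have hlink0 : ∀ F ∈ linkC (facesDelta K b I) v₀, ∀ v ∈ F, v.1 = i₀ → (v.2 : ℕ) ≠ 0 := by
    rintro F ⟨hFf, hv₀F, hins⟩ v hvF h1 h2
    exact hv₀F ((hv₀mem v h1 h2) ▸ hvF)
  have key : ∀ F₁ F₂ : Finset (PolVars n b), (∀ v ∈ F₁, v.1 = i₀ → (v.2 : ℕ) ≠ 0) →
      (∀ v ∈ F₂, v.1 = i₀ → (v.2 : ℕ) ≠ 0) →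
      F₁.image (shiftDown i₀) = F₂.image (shiftDown i₀) → F₁ ⊆ F₂ := by
    intro F₁ F₂ h10 h20 heq v hv
    have hmem : shiftDown i₀ v ∈ F₂.image (shiftDown i₀) :=
      heq ▸ Finset.mem_image_of_mem _ hv
    obtain ⟨u, hu, huv⟩ := Finset.mem_image.mp hmem
    have := aux_shiftDown_inj i₀ (h20 u hu) (h10 v hv) huv
    exact this ▸ hu
  constructor
  · refine ⟨?_, ?_, ?_⟩
    · -- MapsTo
      rintro F hF
      have hF0 := hlink0 F hF
      obtain ⟨hFf, hv₀F, hins⟩ := hF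
      refine ⟨?_, aux_forward hJ₂Mon hv₀₁ hv₀₂ hF0 hins⟩
      rintro v hv h1
      obtain ⟨u, hu, rfl⟩ := Finset.mem_image.mp hv
      have hu1 : u.1 = i₀ := h1
      have hu0 := hF0 u hu hu1
      have hub : (u.2 : ℕ) < b i₀ := by rw [← hu1]; exact u.2.isLt
      show (u.2 : ℕ) - (if u.1 = i₀ then 1 else 0) + 1 < b i₀
      rw [if_pos hu1]
      omega
    · -- InjOn
      intro F₁ h₁ F₂ h₂ heq
      exact Finset.Subset.antisymm (key F₁ F₂ (hlink0 F₁ h₁) (hlink0 F₂ h₂) heq)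
        (key F₂ F₁ (hlink0 F₂ h₂) (hlink0 F₁ h₁) heq.symm)
    · -- SurjOn
      rintro G ⟨hGb, hGface⟩
      have hup : ∀ v : PolVars n b, ∃ u : PolVars n b,
          (v ∈ G → shiftDown i₀ u = v) ∧ (u.1 = i₀ → (u.2 : ℕ) ≠ 0) := by
        intro v
        by_cases h : v.1 = i₀
        · by_cases hb2 : (v.2 : ℕ) + 1 < b v.1
          · refine ⟨⟨v.1, ⟨(v.2 : ℕ) + 1, hb2⟩⟩, fun _ => ?_, fun _ => Nat.succ_ne_zero _⟩
            refine aux_sigma_ext rfl ?_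
            show (v.2 : ℕ) + 1 - (if v.1 = i₀ then 1 else 0) = (v.2 : ℕ)
            rw [if_pos h]
            omega
          · refine ⟨v, fun hv => absurd ?_ hb2, fun _ => ?_⟩
            · have h4 := hGb v hv h
              have hb3 : b v.fst = b i₀ := by rw [h]
              omega
            · have hb3 : b v.fst = b i₀ := by rw [h]
              omega
        · exact ⟨v, fun _ => aux_shiftDown_eq_self h, fun hh => absurd hh h⟩
      choose up hup1 hup2 using hup
      set F : Finset (PolVars n b) := G.image up with hFdef
      have himg : F.image (shiftDown i₀) = G := by
        rw [hFdef, Finset.image_image]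
        exact (Finset.image_congr fun v hv => hup1 v hv).trans Finset.image_id
      have hF0 : ∀ u ∈ F, u.1 = i₀ → (u.2 : ℕ) ≠ 0 := by
        intro u hu h1
        obtain ⟨v, hv, rfl⟩ := Finset.mem_image.mp hu
        exact hup2 v h1
      have hGface' : (∏ v ∈ F.image (shiftDown i₀),
          (X v : MvPolynomial (PolVars n b) K)) ∉ polarIdeal K b J₂ := by
        rw [himg]; exact hGface
      have hins : (∏ v ∈ insert v₀ F,
          (X v : MvPolynomial (PolVars n b) K)) ∉ polarIdeal K b I :=
        aux_backward hbI hJ₂Mon hv₀₁ hv₀₂ hF0 hGface'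
      have hv₀F : v₀ ∉ F := fun hmem => hF0 v₀ hmem hv₀₁ hv₀₂
      have hFface : F ∈ facesDelta K b I := by
        intro hmem
        exact hins (aux_face_anti (Finset.subset_insert _ _) hmem)
      exact ⟨F, ⟨hFface, hv₀F, hins⟩, himg⟩
  · -- InjOn on vertices
    intro u hu w hw h
    obtain ⟨Fu, hFu, huF⟩ := hu
    obtain ⟨Fw, hFw, hwF⟩ := hw
    exact aux_shiftDown_inj i₀ (hlink0 Fu hFu u huF) (hlink0 Fw hFw w hwF) h

end
end

section
/- For every integer k ≥ 1, the ideal L(I)^k has linear quotients; that is, with respect to any total order ≤ on the minimal generating set G(L(I)^k) extending the partial order ≼ defined below, for every u ∈ G(L(I)^k) the colon ideal ({w ∈ G(L(I)^k) : w < u}) : (u) is generated by a subset of the variables of S^℘. -/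
open MvPolynomial

noncomputable section

namespace S14

theorem lex_of_counts : ∀ (l l' : List ℕ), l.length = l'.length → l.Pairwise (· ≤ ·) →
    l'.Pairwise (· ≤ ·) → ∀ x : ℕ, l'.count x < l.count x → (∀ z, z < x → l.count z = l'.count z) →
    List.Lex (· < ·) l l' := by
  intro l
  induction l with
  | nil => intro l' _ _ _ x hx _; simp at hx
  | cons a t ih =>
    intro l' hlen hs hs' x hx hlt
    match l' with
    | [] => simp at hlen
    | a' :: t' =>
      have hax : a ≤ x := by
        by_contra h
        push_neg at h
        have h0 : (a :: t).count x = 0 := by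
          rw [List.count_eq_zero]
          intro hmem
          rcases List.mem_cons.1 hmem with rfl | hm
          · omega
          · exact absurd (List.rel_of_pairwise_cons hs hm) (by omega)
        omega
      have haa' : a ≤ a' := by
        by_contra h
        push_neg at h
        have hxa' : a' < x := lt_of_lt_of_le h hax
        have h1 : (a :: t).count a' = 0 := by
          rw [List.count_eq_zero]
          intro hmem
          rcases List.mem_cons.1 hmem with rfl | hm
          · omega
          · exact absurd (List.rel_of_pairwise_cons hs hm) (by omega)
        have h2 : (a' :: t').count a' ≠ 0 := by
          simp [List.count_cons]
        have h3 := hlt a' hxa'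
        omega
      rcases lt_or_eq_of_le haa' with hlt' | rfl
      · exact List.Lex.rel hlt'
      · refine List.Lex.cons (ih t' (by simpa using hlen) hs.of_cons hs'.of_cons x ?_ ?_)
        · have e1 := List.count_cons (a := x) (b := a) (l := t)
          have e2 := List.count_cons (a := x) (b := a) (l := t')
          simp only [beq_iff_eq] at e1 e2
          omega
        · intro z hz
          have h4 := hlt z hz
          have e1 := List.count_cons (a := z) (b := a) (l := t)
          have e2 := List.count_cons (a := z) (b := a) (l := t')
          simp only [beq_iff_eq] at e1 e2
          omega

def MltM (A B : Multiset ℕ) : Prop :=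
  ∃ x, Multiset.count x B < Multiset.count x A ∧
    ∀ z < x, Multiset.count z A = Multiset.count z B

theorem sort_count (C : Multiset ℕ) (y : ℕ) :
    (Multiset.sort C (· ≤ ·)).count y = Multiset.count y C := by
  rw [← Multiset.coe_count, Multiset.sort_eq]

theorem mltM_lex {A B : Multiset ℕ} (hc : Multiset.card A = Multiset.card B) (h : MltM A B) :
    List.Lex (· < ·) (Multiset.sort A (· ≤ ·)) (Multiset.sort B (· ≤ ·)) := by
  obtain ⟨x, h1, h2⟩ := h
  refine lex_of_counts _ _ (by simp [Multiset.length_sort, hc])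
    (Multiset.pairwise_sort _ _) (Multiset.pairwise_sort _ _) x ?_ ?_
  · rw [sort_count, sort_count]; exact h1
  · intro z hz; rw [sort_count, sort_count]; exact h2 z hz

theorem mltM_trichotomy (A B : Multiset ℕ) : A = B ∨ MltM A B ∨ MltM B A := by
  classical
  by_cases hAB : A = B
  · exact Or.inl hAB
  right
  have hex : ∃ z, Multiset.count z A ≠ Multiset.count z B := by
    by_contra h; push_neg at h; exact hAB (Multiset.ext.2 h)
  set D : Finset ℕ := (A.toFinset ∪ B.toFinset).filter
    (fun z => Multiset.count z A ≠ Multiset.count z B) with hD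
  have hmemD : ∀ z, Multiset.count z A ≠ Multiset.count z B → z ∈ D := by
    intro z hz
    refine Finset.mem_filter.2 ⟨?_, hz⟩
    by_cases h0 : Multiset.count z A = 0
    · exact Finset.mem_union_right _ (Multiset.mem_toFinset.2 (Multiset.count_pos.1 (by omega)))
    · exact Finset.mem_union_left _ (Multiset.mem_toFinset.2 (Multiset.count_pos.1 (by omega)))
  obtain ⟨z0, hz0⟩ := hex
  have hDne : D.Nonempty := ⟨z0, hmemD z0 hz0⟩
  set x := D.min' hDne with hx
  have hxD := D.min'_mem hDne
  have hxne : Multiset.count x A ≠ Multiset.count x B := (Finset.mem_filter.1 hxD).2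
  have hbelow : ∀ z < x, Multiset.count z A = Multiset.count z B := by
    intro z hz
    by_contra hzz
    exact absurd (D.min'_le z (hmemD z hzz)) (by omega)
  rcases Nat.lt_or_ge (Multiset.count x B) (Multiset.count x A) with h | h
  · exact Or.inl ⟨x, h, hbelow⟩
  · exact Or.inr ⟨x, by omega, fun z hz => (hbelow z hz).symm⟩

theorem card_eq_sum_count (A : Multiset ℕ) (N : ℕ) (hA : ∀ y ∈ A, y < N) :
    Multiset.card A = ∑ z ∈ Finset.range N, Multiset.count z A := by
  rw [← Multiset.toFinset_sum_count_eq]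
  refine Finset.sum_subset ?_ ?_
  · intro z hz
    exact Finset.mem_range.2 (hA z (Multiset.mem_toFinset.1 hz))
  · intro z _ hz
    exact Multiset.count_eq_zero.2 (fun hmem => hz (Multiset.mem_toFinset.2 hmem))

theorem exists_gt_of_card_eq {A B : Multiset ℕ} (N : ℕ)
    (hA : ∀ y ∈ A, y < N) (hB : ∀ y ∈ B, y < N)
    (hc : Multiset.card A = Multiset.card B) {x : ℕ}
    (h1 : Multiset.count x B < Multiset.count x A)
    (h2 : ∀ z < x, Multiset.count z A = Multiset.count z B) :
    ∃ y, x < y ∧ Multiset.count y A < Multiset.count y B := by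
  by_contra h
  push_neg at h
  have hxN : x ∈ Finset.range N := by
    refine Finset.mem_range.2 (hA x (Multiset.count_pos.1 (by omega)))
  have hlt : ∑ z ∈ Finset.range N, Multiset.count z B <
      ∑ z ∈ Finset.range N, Multiset.count z A := by
    refine Finset.sum_lt_sum (fun z _ => ?_) ⟨x, hxN, h1⟩
    rcases Nat.lt_trichotomy z x with hz | rfl | hz
    · exact le_of_eq (h2 z hz).symm
    · omega
    · exact h z hz
  rw [← card_eq_sum_count A N hA, ← card_eq_sum_count B N hB] at hlt
  omega

end S14
namespace S14

section
variable {K : Type} [Field K] {m : ℕ}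

/-- exponent vector of `genL K b a` -/
def eVecF (b : Fin m → ℕ) (a : Fin m →₀ ℕ) : PolVars m b →₀ ℕ :=
  ∑ v ∈ Finset.univ.filter (fun v : PolVars m b => (v.2 : ℕ) = a v.1), Finsupp.single v 1

theorem eVecF_apply (b : Fin m → ℕ) (a : Fin m →₀ ℕ) (v : PolVars m b) :
    eVecF b a v = if (v.2 : ℕ) = a v.1 then 1 else 0 := by
  classical
  rw [eVecF, Finsupp.finset_sum_apply]
  simp only [Finsupp.single_apply]
  rw [Finset.sum_ite_eq' (Finset.univ.filter (fun v : PolVars m b => (v.2 : ℕ) = a v.1)) v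
    (fun _ => 1)]
  simp

theorem prod_monomial_one {σ ι : Type} (s : Finset ι) (d : ι → (σ →₀ ℕ)) :
    (∏ i ∈ s, (monomial (d i) (1 : K) : MvPolynomial σ K)) = monomial (∑ i ∈ s, d i) 1 := by
  classical
  induction s using Finset.induction with
  | empty => simp
  | insert _ _ hx ih => rw [Finset.prod_insert hx, Finset.sum_insert hx, ih, monomial_mul, one_mul]

theorem X_eq_monomial {σ : Type} (v : σ) :
    (X v : MvPolynomial σ K) = monomial (Finsupp.single v 1) 1 := by
  simpa using (X_pow_eq_monomial (n := v) (e := 1) (R := K))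

theorem genL_eq (b : Fin m → ℕ) (a : Fin m →₀ ℕ) :
    genL K b a = monomial (eVecF b a) 1 := by
  rw [genL, eVecF, ← prod_monomial_one]
  exact Finset.prod_congr rfl (fun v _ => X_eq_monomial v)

theorem mem_GLkE_iff {b : Fin m → ℕ} {I : Ideal (MvPolynomial (Fin m) K)} {k : ℕ}
    {e : PolVars m b →₀ ℕ} :
    e ∈ GLkE K b I k ↔ ∃ f : Fin k → (Fin m →₀ ℕ),
      (∀ j, (monomial (f j) (1 : K)) ∉ I) ∧ e = ∑ j, eVecF b (f j) := by
  constructor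
  · rintro ⟨f, hf, he⟩
    refine ⟨f, hf, monomial_left_injective (R := K) (σ := PolVars m b) one_ne_zero ?_⟩
    show (monomial e) (1:K) = (monomial (∑ j, eVecF b (f j))) 1
    rw [he]
    simp_rw [genL_eq]
    exact prod_monomial_one _ _
  · rintro ⟨f, hf, rfl⟩
    refine ⟨f, hf, ?_⟩
    simp_rw [genL_eq]
    exact (prod_monomial_one _ _).symm

theorem sum_eVecF_apply {b : Fin m → ℕ} {k : ℕ} (f : Fin k → (Fin m →₀ ℕ)) (v : PolVars m b) :
    (∑ j, eVecF b (f j)) v = ∑ j, (if (v.2 : ℕ) = f j v.1 then 1 else 0) := by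
  rw [Finsupp.finset_sum_apply]
  exact Finset.sum_congr rfl (fun j _ => eVecF_apply b (f j) v)

theorem monomial_not_mem_of_le {I : Ideal (MvPolynomial (Fin m) K)} {a a' : Fin m →₀ ℕ}
    (h : (monomial a (1 : K)) ∉ I) (hle : a' ≤ a) : (monomial a' (1 : K)) ∉ I := by
  intro hmem
  apply h
  have heq : (monomial a (1 : K)) = monomial (a - a') 1 * monomial a' 1 := by
    rw [monomial_mul, one_mul, tsub_add_cancel_of_le hle]
  rw [heq]
  exact Ideal.mul_mem_left _ _ hmem

theorem apply_lt_b {b : Fin m → ℕ} {I : Ideal (MvPolynomial (Fin m) K)}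
    (hI : ZeroDimData K b I) {a : Fin m →₀ ℕ} (ha : (monomial a (1 : K)) ∉ I) (i : Fin m) :
    a i < b i := by
  by_contra h
  push_neg at h
  exact (monomial_not_mem_of_le ha (Finsupp.single_le_iff.2 h)) ((hI.2.2 i).2.1)

/-- the row multiset `J(u,i)` -/
def rowM {b : Fin m → ℕ} (e : PolVars m b →₀ ℕ) (i : Fin m) : Multiset ℕ :=
  ∑ j : Fin (b i), Multiset.replicate (e ⟨i, j⟩) (j : ℕ)

theorem rowList_eq {b : Fin m → ℕ} (e : PolVars m b →₀ ℕ) (i : Fin m) :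
    rowList e i = Multiset.sort (rowM e i) (· ≤ ·) := rfl

theorem count_rowM {b : Fin m → ℕ} (e : PolVars m b →₀ ℕ) (i : Fin m) (x : ℕ) :
    Multiset.count x (rowM e i) = if h : x < b i then e ⟨i, ⟨x, h⟩⟩ else 0 := by
  classical
  rw [rowM, Multiset.count_sum']
  simp_rw [Multiset.count_replicate]
  split
  · next h =>
    rw [Finset.sum_eq_single (⟨x, h⟩ : Fin (b i))]
    · simp
    · intro j _ hj
      rw [if_neg]
      exact fun hx => hj (by simp only [Fin.ext_iff]; omega)
    · intro hj; exact absurd (Finset.mem_univ _) hj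
  · next h =>
    refine Finset.sum_eq_zero (fun j _ => ?_)
    rw [if_neg]
    intro hx
    exact h (hx ▸ j.isLt)

theorem lt_of_mem_rowM {b : Fin m → ℕ} {e : PolVars m b →₀ ℕ} {i : Fin m} {y : ℕ}
    (h : y ∈ rowM e i) : y < b i := by
  by_contra hy
  have hp := Multiset.count_pos.2 h
  rw [count_rowM, dif_neg hy] at hp
  omega

theorem card_rowM {b : Fin m → ℕ} {I : Ideal (MvPolynomial (Fin m) K)}
    (hI : ZeroDimData K b I) {k : ℕ} {f : Fin k → (Fin m →₀ ℕ)}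
    (hf : ∀ j, (monomial (f j) (1 : K)) ∉ I) (i : Fin m) :
    Multiset.card (rowM (∑ j, eVecF b (f j)) i) = k := by
  classical
  have hcs : ∀ (s : Finset (Fin (b i))) (g : Fin (b i) → Multiset ℕ),
      Multiset.card (∑ j ∈ s, g j) = ∑ j ∈ s, Multiset.card (g j) := by
    intro s g
    induction s using Finset.induction with
    | empty => simp
    | insert _ _ hx ih => rw [Finset.sum_insert hx, Finset.sum_insert hx, Multiset.card_add, ih]
  rw [rowM, hcs]
  simp_rw [Multiset.card_replicate, sum_eVecF_apply]
  rw [Finset.sum_comm]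
  have h1 : ∀ j' : Fin k,
      (∑ j : Fin (b i), if ((j : ℕ) = f j' i) then 1 else 0) = 1 := by
    intro j'
    have hlt := apply_lt_b hI (hf j') i
    rw [Finset.sum_eq_single (⟨f j' i, hlt⟩ : Fin (b i))]
    · simp
    · intro j _ hj
      rw [if_neg]
      exact fun hx => hj (by simp only [Fin.ext_iff]; omega)
    · intro hj; exact absurd (Finset.mem_univ _) hj
  rw [Finset.sum_congr rfl (fun j' _ => h1 j')]
  simp

end
end S14
namespace S14
section
variable {K : Type} [Field K] {m : ℕ}

theorem key_step {b : Fin m → ℕ} {I : Ideal (MvPolynomial (Fin m) K)}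
    (hI : ZeroDimData K b I) {k : ℕ}
    (r : (PolVars m b →₀ ℕ) → (PolVars m b →₀ ℕ) → Prop)
    (hext : ∀ e ∈ GLkE K b I k, ∀ e' ∈ GLkE K b I k,
      (∀ i : Fin m, lexLE (rowList e i) (rowList e' i)) → r e e')
    {e e' : PolVars m b →₀ ℕ} (he : e ∈ GLkE K b I k) (he' : e' ∈ GLkE K b I k)
    {i : Fin m} {x : ℕ}
    (h1 : Multiset.count x (rowM e i) < Multiset.count x (rowM e' i))
    (h2 : ∀ z < x, Multiset.count z (rowM e' i) = Multiset.count z (rowM e i)) :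
    ∃ (hx : x < b i), e (⟨i, ⟨x, hx⟩⟩ : PolVars m b) < e' ⟨i, ⟨x, hx⟩⟩ ∧
      ∃ e'' ∈ GLkE K b I k, r e'' e ∧ e'' ≠ e ∧
        e'' ≤ e + Finsupp.single (⟨i, ⟨x, hx⟩⟩ : PolVars m b) 1 := by
  classical
  have hxb : x < b i := lt_of_mem_rowM (Multiset.count_pos.1 (lt_of_le_of_lt (Nat.zero_le _) h1))
  obtain ⟨f, hf, hef⟩ := mem_GLkE_iff.1 he
  obtain ⟨f', hf', hef'⟩ := mem_GLkE_iff.1 he'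
  have hcard : Multiset.card (rowM e' i) = Multiset.card (rowM e i) := by
    rw [hef, hef', card_rowM hI hf i, card_rowM hI hf' i]
  obtain ⟨y, hxy, hy⟩ := exists_gt_of_card_eq (b i) (fun z hz => lt_of_mem_rowM hz)
    (fun z hz => lt_of_mem_rowM hz) hcard h1 h2
  have hyb : y < b i := lt_of_mem_rowM (Multiset.count_pos.1 (lt_of_le_of_lt (Nat.zero_le _) hy))
  have hcnt : ∀ (ee : PolVars m b →₀ ℕ) (i' : Fin m) (z : ℕ) (hz : z < b i'),
      Multiset.count z (rowM ee i') = ee ⟨i', ⟨z, hz⟩⟩ := by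
    intro ee i' z hz; rw [count_rowM, dif_pos hz]
  have hey : 0 < e ⟨i, ⟨y, hyb⟩⟩ := by
    rw [← hcnt e i y hyb]; omega
  obtain ⟨j0, hj0⟩ : ∃ j0, f j0 i = y := by
    by_contra hno
    push_neg at hno
    have h0 : e ⟨i, ⟨y, hyb⟩⟩ = 0 := by
      rw [hef, sum_eVecF_apply]
      refine Finset.sum_eq_zero (fun j _ => ?_)
      rw [if_neg]
      exact fun h => hno j h.symm
    omega
  set g : Fin k → (Fin m →₀ ℕ) := Function.update f j0 ((f j0).update i x) with hg
  have hgj0 : g j0 = (f j0).update i x := by rw [hg]; simp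
  have hgne : ∀ j, j ≠ j0 → g j = f j := fun j hj => Function.update_of_ne hj _ _
  have hgapp : ∀ t, g j0 t = if t = i then x else f j0 t := by
    intro t; rw [hgj0, Finsupp.coe_update]; exact Function.update_apply _ _ _ _
  have hgle : g j0 ≤ f j0 := by
    intro t
    rw [hgapp]
    split
    · next h => rw [h, hj0]; omega
    · exact le_rfl
  have hgI : ∀ j, (monomial (g j) (1 : K)) ∉ I := by
    intro j
    by_cases hj : j = j0
    · rw [hj]; exact monomial_not_mem_of_le (hf j0) hgle
    · rw [hgne j hj]; exact hf j
  have he''G : (∑ j, eVecF b (g j)) ∈ GLkE K b I k := mem_GLkE_iff.2 ⟨g, hgI, rfl⟩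
  set e'' : PolVars m b →₀ ℕ := ∑ j, eVecF b (g j) with he''d
  -- splitting sums at j0
  have hsum2 : ∀ (h hh : Fin k → ℕ), (∀ j, j ≠ j0 → h j = hh j) →
      ∑ j, h j = h j0 + ∑ j ∈ Finset.univ.erase j0, hh j := by
    intro h hh hagree
    rw [← Finset.add_sum_erase _ h (Finset.mem_univ j0)]
    exact congrArg _ (Finset.sum_congr rfl fun j hj => hagree j (Finset.ne_of_mem_erase hj))
  -- values of e'' versus e
  have he''v : ∀ (i' : Fin m) (j' : Fin (b i')),
      ((⟨i', j'⟩ : PolVars m b) ≠ ⟨i, ⟨x, hxb⟩⟩) → ((⟨i', j'⟩ : PolVars m b) ≠ ⟨i, ⟨y, hyb⟩⟩) →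
      e'' ⟨i', j'⟩ = e ⟨i', j'⟩ := by
    intro i' j' hv1 hv2
    rw [he''d, hef, sum_eVecF_apply, sum_eVecF_apply]
    refine Finset.sum_congr rfl (fun j _ => ?_)
    show (if ((j' : ℕ) = g j i') then (1:ℕ) else 0) = (if ((j' : ℕ) = f j i') then 1 else 0)
    by_cases hj : j = j0
    · rw [hj, hgapp i']
      by_cases hvi : i' = i
      · subst hvi
        rw [if_pos rfl, hj0]
        have hx2 : (j' : ℕ) ≠ x := by
          intro h
          exact hv1 (congrArg (fun t : Fin (b i') => (⟨i', t⟩ : PolVars m b)) (Fin.ext h))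
        have hy2 : (j' : ℕ) ≠ y := by
          intro h
          exact hv2 (congrArg (fun t : Fin (b i') => (⟨i', t⟩ : PolVars m b)) (Fin.ext h))
        rw [if_neg hx2, if_neg hy2]
      · rw [if_neg hvi]
    · rw [hgne j hj]
  have he''x : e'' ⟨i, ⟨x, hxb⟩⟩ = e ⟨i, ⟨x, hxb⟩⟩ + 1 := by
    have hgside : e'' ⟨i, ⟨x, hxb⟩⟩ =
        1 + ∑ j ∈ Finset.univ.erase j0, (if ((x : ℕ) = f j i) then 1 else 0) := by
      rw [he''d, sum_eVecF_apply]
      rw [hsum2 _ _ (fun j hj => by rw [hgne j hj])]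
      congr 1
      show (if ((x : ℕ) = g j0 i) then (1:ℕ) else 0) = 1
      rw [if_pos]
      rw [hgapp, if_pos rfl]
    have hfside : e ⟨i, ⟨x, hxb⟩⟩ =
        0 + ∑ j ∈ Finset.univ.erase j0, (if ((x : ℕ) = f j i) then 1 else 0) := by
      rw [hef, sum_eVecF_apply]
      rw [hsum2 _ _ (fun _ _ => rfl)]
      congr 1
      show (if ((x : ℕ) = f j0 i) then (1:ℕ) else 0) = 0
      rw [if_neg]
      rw [hj0]
      omega
    omega
  have he''y : e'' ⟨i, ⟨y, hyb⟩⟩ + 1 = e ⟨i, ⟨y, hyb⟩⟩ := by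
    have hgside : e'' ⟨i, ⟨y, hyb⟩⟩ =
        0 + ∑ j ∈ Finset.univ.erase j0, (if ((y : ℕ) = f j i) then 1 else 0) := by
      rw [he''d, sum_eVecF_apply]
      rw [hsum2 _ _ (fun j hj => by rw [hgne j hj])]
      congr 1
      show (if ((y : ℕ) = g j0 i) then (1:ℕ) else 0) = 0
      rw [if_neg]
      rw [hgapp, if_pos rfl]
      omega
    have hfside : e ⟨i, ⟨y, hyb⟩⟩ =
        1 + ∑ j ∈ Finset.univ.erase j0, (if ((y : ℕ) = f j i) then 1 else 0) := by
      rw [hef, sum_eVecF_apply]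
      rw [hsum2 _ _ (fun _ _ => rfl)]
      congr 1
      show (if ((y : ℕ) = f j0 i) then (1:ℕ) else 0) = 1
      rw [if_pos]
      rw [hj0]
    omega
  -- rows of e'' versus e
  have hrow_ne : ∀ i' : Fin m, i' ≠ i → rowM e'' i' = rowM e i' := by
    intro i' hi'
    refine Multiset.ext.2 (fun z => ?_)
    rw [count_rowM, count_rowM]
    split
    · next hz =>
      exact he''v i' ⟨z, hz⟩ (fun h => hi' (congrArg Sigma.fst h))
        (fun h => hi' (congrArg Sigma.fst h))
    · rfl
  have hml : MltM (rowM e'' i) (rowM e i) := by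
    refine ⟨x, ?_, ?_⟩
    · rw [hcnt e'' i x hxb, hcnt e i x hxb]
      omega
    · intro z hz
      by_cases hzb : z < b i
      · rw [hcnt e'' i z hzb, hcnt e i z hzb]
        refine he''v i ⟨z, hzb⟩ ?_ ?_
        · intro h
          have h' := congrArg (fun v : PolVars m b => (v.2 : ℕ)) h
          simp only at h'
          omega
        · intro h
          have h' := congrArg (fun v : PolVars m b => (v.2 : ℕ)) h
          simp only at h'
          omega
      · rw [count_rowM, count_rowM, dif_neg hzb, dif_neg hzb]
  have hcard'' : Multiset.card (rowM e'' i) = Multiset.card (rowM e i) := by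
    rw [he''d, hef, card_rowM hI hgI i, card_rowM hI hf i]
  have hlex : ∀ i' : Fin m, lexLE (rowList e'' i') (rowList e i') := by
    intro i'
    by_cases hi' : i' = i
    · subst hi'
      exact Or.inr (by rw [rowList_eq, rowList_eq]; exact mltM_lex hcard'' hml)
    · exact Or.inl (by rw [rowList_eq, rowList_eq, hrow_ne i' hi'])
  have hre'' : r e'' e := hext e'' he''G e he hlex
  have hne'' : e'' ≠ e := by
    intro h
    rw [h] at he''x
    omega
  have hle'' : e'' ≤ e + Finsupp.single (⟨i, ⟨x, hxb⟩⟩ : PolVars m b) 1 := by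
    intro v
    rw [Finsupp.add_apply, Finsupp.single_apply]
    by_cases hv1 : v = (⟨i, ⟨x, hxb⟩⟩ : PolVars m b)
    · rw [hv1, if_pos rfl]
      omega
    · rw [if_neg (fun h => hv1 h.symm)]
      obtain ⟨i', j'⟩ := v
      by_cases hv2 : (⟨i', j'⟩ : PolVars m b) = ⟨i, ⟨y, hyb⟩⟩
      · rw [hv2]
        omega
      · rw [he''v i' j' hv1 hv2]
        omega
  have hlt0 : e ⟨i, ⟨x, hxb⟩⟩ < e' ⟨i, ⟨x, hxb⟩⟩ := by
    rw [← hcnt e i x hxb, ← hcnt e' i x hxb]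
    exact h1
  exact ⟨hxb, hlt0, e'', he''G, hre'', hne'', hle''⟩

end
end S14
/-- For every `k ≥ 1` the ideal `L(I)^k` has linear quotients: with
respect to any total order on the minimal generating set `G(L(I)^k)` extending the
partial order `≼` (defined via the row-wise lexicographic comparison of the sequences
`J(·,i)`), for every `u ∈ G(L(I)^k)` the colon ideal `({w ∈ G(L(I)^k) : w < u}) : (u)`
is generated by a subset of the variables of `S^℘`. -/
theorem statement14 {K : Type} [Field K] {n : ℕ} (b : Fin n → ℕ)
    (I : Ideal (MvPolynomial (Fin n) K)) (hI : ZeroDimData K b I)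
    (k : ℕ) (hk : 1 ≤ k)
    (r : (PolVars n b →₀ ℕ) → (PolVars n b →₀ ℕ) → Prop)
    (hrefl : ∀ e ∈ GLkE K b I k, r e e)
    (hantisymm : ∀ e ∈ GLkE K b I k, ∀ e' ∈ GLkE K b I k, r e e' → r e' e → e = e')
    (htrans : ∀ e ∈ GLkE K b I k, ∀ e' ∈ GLkE K b I k, ∀ e'' ∈ GLkE K b I k,
      r e e' → r e' e'' → r e e'')
    (htotal : ∀ e ∈ GLkE K b I k, ∀ e' ∈ GLkE K b I k, r e e' ∨ r e' e)
    (hext : ∀ e ∈ GLkE K b I k, ∀ e' ∈ GLkE K b I k,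
      (∀ i : Fin n, lexLE (rowList e i) (rowList e' i)) → r e e') :
    ∀ e ∈ GLkE K b I k,
      ∃ T : Set (PolVars n b),
        (Ideal.span {p : MvPolynomial (PolVars n b) K |
            ∃ e' ∈ GLkE K b I k, r e' e ∧ e' ≠ e ∧ p = monomial e' (1 : K)}).colon
          (Ideal.span {(monomial e (1 : K) : MvPolynomial (PolVars n b) K)})
        = Ideal.span ((fun v => (X v : MvPolynomial (PolVars n b) K)) '' T) := by
  intro e he
  refine ⟨{v : PolVars n b | ∃ e'' ∈ GLkE K b I k, r e'' e ∧ e'' ≠ e ∧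
    e'' ≤ e + Finsupp.single v 1}, ?_⟩
  have hNset : {p : MvPolynomial (PolVars n b) K |
      ∃ e' ∈ GLkE K b I k, r e' e ∧ e' ≠ e ∧ p = monomial e' (1 : K)}
      = (fun c => (monomial c (1 : K) : MvPolynomial (PolVars n b) K)) ''
        {e' | e' ∈ GLkE K b I k ∧ r e' e ∧ e' ≠ e} := by
    ext p
    constructor
    · rintro ⟨e', h1, h2, h3, rfl⟩
      exact ⟨e', ⟨h1, h2, h3⟩, rfl⟩
    · rintro ⟨e', ⟨h1, h2, h3⟩, rfl⟩
      exact ⟨e', h1, h2, h3, rfl⟩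
  apply le_antisymm
  · -- colon ≤ span of variables
    intro p hp
    rw [Ideal.mem_colon_span_singleton, hNset, mem_ideal_span_monomial_image] at hp
    rw [mem_ideal_span_X_image]
    intro c hc
    have hcu : c + e ∈ (p * monomial e (1 : K)).support := by
      rw [mem_support_iff, coeff_mul_monomial, mul_one]
      exact mem_support_iff.1 hc
    obtain ⟨e', ⟨he'G, hre', hne'⟩, hle'⟩ := hp _ hcu
    have hMlt : ∃ i, S14.MltM (S14.rowM e' i) (S14.rowM e i) := by
      by_contra hno
      push_neg at hno
      have hall : ∀ i : Fin n, lexLE (rowList e i) (rowList e' i) := by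
        intro i
        rcases S14.mltM_trichotomy (S14.rowM e i) (S14.rowM e' i) with heq | hlt | hgt
        · exact Or.inl (by rw [S14.rowList_eq, S14.rowList_eq, heq])
        · refine Or.inr ?_
          rw [S14.rowList_eq, S14.rowList_eq]
          refine S14.mltM_lex ?_ hlt
          obtain ⟨f, hf, hef⟩ := S14.mem_GLkE_iff.1 he
          obtain ⟨f', hf', hef'⟩ := S14.mem_GLkE_iff.1 he'G
          rw [hef, hef', S14.card_rowM hI hf i, S14.card_rowM hI hf' i]
        · exact absurd hgt (hno i)
      exact hne' (hantisymm e' he'G e he hre' (hext e he e' he'G hall))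
    obtain ⟨i, x, h1, h2⟩ := hMlt
    obtain ⟨hxb, hlt0, e'', he''G, hre'', hne'', hle''⟩ :=
      S14.key_step hI r hext he he'G h1 h2
    refine ⟨⟨i, ⟨x, hxb⟩⟩, ⟨e'', he''G, hre'', hne'', hle''⟩, ?_⟩
    have hc1 := hle' (⟨i, ⟨x, hxb⟩⟩ : PolVars n b)
    rw [Finsupp.add_apply] at hc1
    omega
  · -- span of variables ≤ colon
    rw [Ideal.span_le]
    rintro _ ⟨v, ⟨e'', he''G, hre'', hne'', hle''⟩, rfl⟩
    rw [SetLike.mem_coe, Ideal.mem_colon_span_singleton]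
    have hstep : (X v : MvPolynomial (PolVars n b) K) * monomial e 1 =
        monomial (e + Finsupp.single v 1 - e'') 1 * monomial e'' 1 := by
      rw [S14.X_eq_monomial, monomial_mul, monomial_mul, one_mul,
        tsub_add_cancel_of_le hle'', add_comm]
    rw [hstep]
    exact Ideal.mul_mem_left _ _ (Ideal.subset_span ⟨e'', he''G, hre'', hne'', rfl⟩)

end
end

section
/- Fix k ≥ 1 and a total order ≤ on G(L(I)^k) extending the partial order ≼. Let u_1, …, u_k ∈ Mon(S∖I) with u_j = x_1^{a_1(j)}⋯x_n^{a_n(j)}, and let u = ∏_{i=1}^n ∏_{j=1}^k x_{i, a_i(j)+1} be the corresponding minimal generator of L(I)^k. Set c_i = max{a_i(1),…,a_i(k)} for each i. Then the colon ideal ({w ∈ G(L(I)^k) : w < u}) : (u) equals the ideal generated by the variables {x_{i,j} : 1 ≤ i ≤ n, 1 ≤ j ≤ c_i}; in particular, its minimal number of generators equals deg lcm(u_1, …, u_k) = Σ_{i=1}^n c_i. -/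
open MvPolynomial

noncomputable section

namespace Stmt15Aux

open Finset

lemma lex_trichotomy : ∀ (l l' : List ℕ), List.Lex (· < ·) l l' ∨ l = l' ∨ List.Lex (· < ·) l' l
  | [], [] => Or.inr (Or.inl rfl)
  | [], _a :: _t => Or.inl List.Lex.nil
  | _a :: _t, [] => Or.inr (Or.inr List.Lex.nil)
  | a :: t, a' :: t' => by
    rcases lt_trichotomy a a' with h | h | h
    · exact Or.inl (List.Lex.rel h)
    · subst h
      rcases lex_trichotomy t t' with h | h | h
      · exact Or.inl (List.Lex.cons h)
      · exact Or.inr (Or.inl (by rw [h]))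
      · exact Or.inr (Or.inr (List.Lex.cons h))
    · exact Or.inr (Or.inr (List.Lex.rel h))

lemma lexLE_of_not_lex {l l' : List ℕ} (h : ¬ List.Lex (· < ·) l' l) : lexLE l l' := by
  rcases lex_trichotomy l l' with h1 | h1 | h1
  · exact Or.inr h1
  · exact Or.inl h1
  · exact absurd h1 h

lemma not_lex_of_count (c : ℕ) : ∀ (l l' : List ℕ), l.Pairwise (· ≤ ·) →
    l.length = l'.length → (∀ x ∈ l, x ≤ c) →
    (∀ j, j < c → l'.count j ≤ l.count j) → ¬ List.Lex (· < ·) l' l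
  | [], l', _, hlen, _, _, hlex => by cases hlex
  | a :: t, l', hs, hlen, hbd, hcnt, hlex => by
    cases hlex with
    | nil => simp at hlen
    | @cons _ t' _ hlex' =>
        refine not_lex_of_count c t t' (List.pairwise_cons.mp hs).2 ?_ ?_ ?_ hlex'
        · simpa using hlen
        · exact fun x hx => hbd x (List.mem_cons_of_mem _ hx)
        · intro j hj
          have := hcnt j hj
          rw [List.count_cons, List.count_cons] at this
          omega
    | @rel a' t' _ _ h =>
        have ha : a ≤ c := hbd a List.mem_cons_self
        have h1 : List.count a' (a :: t) = 0 := by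
          rw [List.count_eq_zero]
          intro hmem
          have h2 := (List.pairwise_cons.mp hs).1
          rcases List.mem_cons.mp hmem with rfl | hmem'
          · exact absurd h (lt_irrefl _)
          · exact absurd (h2 _ hmem') (not_le.mpr h)
        have h2 : 1 ≤ List.count a' (a' :: t') := by simp [List.count_cons]
        have := hcnt a' (lt_of_lt_of_le h ha)
        omega

section

variable {K : Type} [Field K] {n : ℕ} {b : Fin n → ℕ}

/-- The exponent vector of `genL K b a`. -/
def ind (b : Fin n → ℕ) (a : Fin n →₀ ℕ) : PolVars n b →₀ ℕ :=
  ∑ v ∈ Finset.univ.filter (fun v : PolVars n b => (v.2 : ℕ) = a v.1), Finsupp.single v 1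

lemma ind_apply (a : Fin n →₀ ℕ) (v : PolVars n b) :
    ind b a v = if (v.2 : ℕ) = a v.1 then 1 else 0 := by
  classical
  rw [ind, Finsupp.finset_sum_apply]
  simp [Finsupp.single_apply]

lemma genL_eq (a : Fin n →₀ ℕ) : genL K b a = monomial (ind b a) (1 : K) := by
  rw [genL, ind, monomial_sum_one]
  rfl

lemma prod_genL {k : ℕ} (f : Fin k → (Fin n →₀ ℕ)) :
    (∏ j, genL K b (f j)) = monomial (∑ j, ind b (f j)) (1 : K) := by
  rw [monomial_sum_one]
  exact Finset.prod_congr rfl fun j _ => genL_eq (f j)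

lemma monomial_inj' {e e' : PolVars n b →₀ ℕ}
    (h : (monomial e (1 : K)) = monomial e' (1 : K)) : e = e' := by
  have := congrArg (coeff e') h
  rw [coeff_monomial, coeff_monomial, if_pos rfl] at this
  by_contra hne
  rw [if_neg hne] at this
  exact one_ne_zero this.symm

lemma not_mem_of_le {I : Ideal (MvPolynomial (Fin n) K)} {a a' : Fin n →₀ ℕ}
    (hle : a' ≤ a) (ha : monomial a (1 : K) ∉ I) : monomial a' (1 : K) ∉ I := fun h => ha <| by
  have h2 : monomial a (1 : K) = monomial a' 1 * monomial (a - a') 1 := by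
    rw [monomial_mul, one_mul, add_tsub_cancel_of_le hle]
  rw [h2]
  exact Ideal.mul_mem_right _ _ h

lemma lt_b {I : Ideal (MvPolynomial (Fin n) K)} (hI : ZeroDimData K b I)
    {a : Fin n →₀ ℕ} (ha : monomial a (1 : K) ∉ I) (i : Fin n) : a i < b i := by
  by_contra hcon
  push_neg at hcon
  refine not_mem_of_le (Finsupp.single_le_iff.mpr hcon) ha ?_
  exact (hI.2.2 i).2.1

/-- The row multiset of an exponent vector. -/
def rowM (e : PolVars n b →₀ ℕ) (i : Fin n) : Multiset ℕ :=
  ∑ j : Fin (b i), Multiset.replicate (e ⟨i, j⟩) (j : ℕ)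

lemma rowList_eq (e : PolVars n b →₀ ℕ) (i : Fin n) :
    rowList e i = Multiset.sort (rowM e i) (· ≤ ·) := rfl

lemma count_rowM (e : PolVars n b →₀ ℕ) (i : Fin n) {t : ℕ} (ht : t < b i) :
    (rowM e i).count t = e ⟨i, ⟨t, ht⟩⟩ := by
  rw [rowM, Multiset.count_sum']
  rw [Finset.sum_eq_single (⟨t, ht⟩ : Fin (b i))]
  · simp [Multiset.count_replicate]
  · intro j _ hj
    rw [Multiset.count_replicate, if_neg (fun hjt => hj (Fin.ext hjt))]
  · simp

lemma card_rowM (e : PolVars n b →₀ ℕ) (i : Fin n) :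
    Multiset.card (rowM e i) = ∑ j : Fin (b i), e ⟨i, j⟩ := by
  rw [rowM]
  induction (Finset.univ : Finset (Fin (b i))) using Finset.cons_induction with
  | empty => simp
  | cons a s ha ih => simp [Finset.sum_cons, ih]

lemma count_rowList (e : PolVars n b →₀ ℕ) (i : Fin n) (t : ℕ) :
    (rowList e i).count t = (rowM e i).count t := by
  rw [rowList_eq, ← Multiset.coe_count, Multiset.sort_eq]

lemma length_rowList (e : PolVars n b →₀ ℕ) (i : Fin n) :
    (rowList e i).length = Multiset.card (rowM e i) := by
  rw [rowList_eq, Multiset.length_sort]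

lemma sumInd_apply {k : ℕ} (f : Fin k → (Fin n →₀ ℕ)) (v : PolVars n b) :
    (∑ t, ind b (f t)) v = ∑ t : Fin k, (if (v.2 : ℕ) = f t v.1 then 1 else 0) := by
  rw [Finsupp.finset_sum_apply]
  exact Finset.sum_congr rfl fun t _ => ind_apply _ _

lemma card_rowM_sumInd {k : ℕ} (f : Fin k → (Fin n →₀ ℕ)) (i : Fin n)
    (hfb : ∀ t, f t i < b i) :
    Multiset.card (rowM (∑ t, ind b (f t)) i) = k := by
  rw [card_rowM]
  have : ∀ j : Fin (b i), (∑ t, ind b (f t)) ⟨i, j⟩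
      = ∑ t : Fin k, (if (j : ℕ) = f t i then 1 else 0) := fun j => sumInd_apply f ⟨i, j⟩
  rw [Finset.sum_congr rfl fun j _ => this j, Finset.sum_comm]
  rw [Finset.sum_congr rfl (fun t _ => ?_), Finset.sum_const, smul_eq_mul, mul_one,
    Finset.card_univ, Fintype.card_fin]
  rw [Finset.sum_eq_single (⟨f t i, hfb t⟩ : Fin (b i))]
  · simp
  · intro j _ hj
    rw [if_neg (fun hjt => hj (Fin.ext hjt))]
  · simp

lemma mem_rowM_le {k : ℕ} (f : Fin k → (Fin n →₀ ℕ)) (i : Fin n) {t : ℕ}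
    (h : t ∈ rowM (∑ s, ind b (f s)) i) : t ≤ Finset.univ.sup (fun j => f j i) := by
  classical
  have hpos := Multiset.count_pos.mpr h
  by_cases ht : t < b i
  · rw [count_rowM _ _ ht, sumInd_apply] at hpos
    obtain ⟨s, -, hs⟩ := Finset.exists_ne_zero_of_sum_ne_zero hpos.ne'
    have h2 : t = f s i := by
      by_contra hc
      exact hs (if_neg hc)
    exact h2 ▸ Finset.le_sup (f := fun j => f j i) (Finset.mem_univ s)
  · exfalso
    rw [rowM, Multiset.count_sum'] at hpos
    have hz : ∀ j : Fin (b i),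
        Multiset.count t (Multiset.replicate ((∑ s, ind b (f s)) ⟨i, j⟩) (j : ℕ)) = 0 := by
      intro j
      rw [Multiset.count_replicate, if_neg (fun hjt : (j : ℕ) = t => ht (hjt ▸ j.isLt))]
    rw [Finset.sum_congr rfl fun j _ => hz j, Finset.sum_const, smul_eq_mul, mul_zero] at hpos
    exact lt_irrefl 0 hpos

lemma rows_le_of_counts {k : ℕ} (hk : 1 ≤ k) (f g : Fin k → (Fin n →₀ ℕ))
    (hfb : ∀ t i, f t i < b i) (hgb : ∀ t i, g t i < b i)
    (H : ∀ v : PolVars n b, (v.2 : ℕ) < Finset.univ.sup (fun j => f j v.1) →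
      (∑ t, ind b (g t)) v ≤ (∑ t, ind b (f t)) v)
    (i : Fin n) : lexLE (rowList (∑ t, ind b (f t)) i) (rowList (∑ t, ind b (g t)) i) := by
  classical
  have hb0 : 0 < b i := Nat.lt_of_le_of_lt (Nat.zero_le _) (hfb ⟨0, hk⟩ i)
  have hcb : Finset.univ.sup (fun j => f j i) < b i :=
    (Finset.sup_lt_iff hb0).mpr fun t _ => hfb t i
  apply lexLE_of_not_lex
  apply not_lex_of_count (Finset.univ.sup (fun j => f j i))
  · rw [rowList_eq]; exact Multiset.pairwise_sort _ _
  · rw [length_rowList, length_rowList, card_rowM_sumInd f i (fun t => hfb t i),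
      card_rowM_sumInd g i (fun t => hgb t i)]
  · intro x hx
    rw [rowList_eq, Multiset.mem_sort] at hx
    exact mem_rowM_le f i hx
  · intro j hj
    rw [count_rowList, count_rowList, count_rowM _ _ (hj.trans hcb),
      count_rowM _ _ (hj.trans hcb)]
    exact H ⟨i, ⟨j, hj.trans hcb⟩⟩ hj

lemma reverse_step {k : ℕ} (f : Fin k → (Fin n →₀ ℕ)) (hfb : ∀ t i, f t i < b i)
    (i₀ : Fin n) (t₀ : Fin k) (hmax : f t₀ i₀ = Finset.univ.sup (fun j => f j i₀))
    (s : ℕ) (hs : s < f t₀ i₀) :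
    ∃ g : Fin k → (Fin n →₀ ℕ), (∀ t, g t ≤ f t) ∧
      (∑ t, ind b (g t)) ≤ (∑ t, ind b (f t))
        + Finsupp.single (⟨i₀, ⟨s, hs.trans (hfb t₀ i₀)⟩⟩ : PolVars n b) 1 ∧
      (∑ t, ind b (g t)) ≠ (∑ t, ind b (f t)) ∧
      ∀ i, lexLE (rowList (∑ t, ind b (g t)) i) (rowList (∑ t, ind b (f t)) i) := by
  classical
  set vs : PolVars n b := ⟨i₀, ⟨s, hs.trans (hfb t₀ i₀)⟩⟩ with hvs
  set vc : PolVars n b := ⟨i₀, ⟨f t₀ i₀, hfb t₀ i₀⟩⟩ with hvc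
  set g : Fin k → (Fin n →₀ ℕ) := Function.update f t₀ ((f t₀).update i₀ s) with hg
  have hgt₀ : ∀ i, g t₀ i = if i = i₀ then s else f t₀ i := by
    intro i
    rw [hg, Function.update_self, Finsupp.coe_update, Function.update_apply]
  have hgne : ∀ t, t ≠ t₀ → g t = f t := fun t ht => Function.update_of_ne ht _ _
  have hgle : ∀ t, g t ≤ f t := by
    intro t
    by_cases ht : t = t₀
    · subst ht
      rw [Finsupp.le_def]
      intro i
      rw [hgt₀]
      split
      · next h => subst h; exact hs.le
      · exact le_refl _
    · rw [hgne t ht]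
  have hgb : ∀ t i, g t i < b i :=
    fun t i => lt_of_le_of_lt (Finsupp.le_def.mp (hgle t) i) (hfb t i)
  have hvcne : ∀ (i : Fin n) (j : Fin (b i)), i ≠ i₀ →
      ((Finsupp.single vc 1 : PolVars n b →₀ ℕ) ⟨i, j⟩ = 0 ∧
       (Finsupp.single vs 1 : PolVars n b →₀ ℕ) ⟨i, j⟩ = 0) := by
    intro i j hi
    constructor <;>
    · rw [Finsupp.single_apply, if_neg]
      intro h
      exact hi (congrArg Sigma.fst h).symm
  have hvc_if : ∀ j : Fin (b i₀),
      (Finsupp.single vc 1 : PolVars n b →₀ ℕ) ⟨i₀, j⟩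
        = if (j : ℕ) = f t₀ i₀ then 1 else 0 := by
    intro j
    rw [Finsupp.single_apply]
    refine if_congr ?_ rfl rfl
    rw [hvc]
    constructor
    · intro h
      rw [Sigma.mk.inj_iff, heq_eq_eq] at h
      exact (congrArg Fin.val h.2).symm
    · intro h
      rw [Sigma.mk.inj_iff, heq_eq_eq]
      exact ⟨rfl, Fin.ext h.symm⟩
  have hvs_if : ∀ j : Fin (b i₀),
      (Finsupp.single vs 1 : PolVars n b →₀ ℕ) ⟨i₀, j⟩
        = if (j : ℕ) = s then 1 else 0 := by
    intro j
    rw [Finsupp.single_apply]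
    refine if_congr ?_ rfl rfl
    rw [hvs]
    constructor
    · intro h
      rw [Sigma.mk.inj_iff, heq_eq_eq] at h
      exact (congrArg Fin.val h.2).symm
    · intro h
      rw [Sigma.mk.inj_iff, heq_eq_eq]
      exact ⟨rfl, Fin.ext h.symm⟩
  have key : (∑ t, ind b (g t)) + Finsupp.single vc 1
      = (∑ t, ind b (f t)) + Finsupp.single vs 1 := by
    ext v
    rw [Finsupp.add_apply, Finsupp.add_apply, sumInd_apply, sumInd_apply,
      ← Finset.add_sum_erase _ _ (Finset.mem_univ t₀),
      ← Finset.add_sum_erase _ _ (Finset.mem_univ t₀)]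
    have hsame : ∀ t ∈ Finset.univ.erase t₀,
        (if (v.2 : ℕ) = g t v.1 then 1 else 0) = (if (v.2 : ℕ) = f t v.1 then 1 else 0) := by
      intro t ht
      rw [hgne t (Finset.mem_erase.mp ht).1]
    rw [Finset.sum_congr rfl hsame]
    obtain ⟨i, j⟩ := v
    dsimp only
    rcases eq_or_ne i i₀ with rfl | hi
    · rw [hvc_if, hvs_if, hgt₀, if_pos rfl]
      ring
    · rw [(hvcne i j hi).1, (hvcne i j hi).2, hgt₀, if_neg hi]
  refine ⟨g, hgle, ?_, ?_, ?_⟩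
  · rw [Finsupp.le_def]
    intro v
    have hv := DFunLike.congr_fun key v
    rw [Finsupp.add_apply, Finsupp.add_apply] at hv
    rw [Finsupp.add_apply]
    omega
  · intro hEq
    have hv := DFunLike.congr_fun key vs
    rw [Finsupp.add_apply, Finsupp.add_apply, hEq] at hv
    have h1 : (Finsupp.single vc 1 : PolVars n b →₀ ℕ) vs = 0 := by
      rw [hvs, hvc_if]
      exact if_neg (Nat.ne_of_lt hs)
    have h2 : (Finsupp.single vs 1 : PolVars n b →₀ ℕ) vs = 1 := Finsupp.single_eq_same
    omega
  · intro i
    rcases eq_or_ne i i₀ with rfl | hi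
    · apply lexLE_of_not_lex
      apply not_lex_of_count (f t₀ i)
      · rw [rowList_eq]; exact Multiset.pairwise_sort _ _
      · rw [length_rowList, length_rowList, card_rowM_sumInd f i (fun t => hfb t i),
          card_rowM_sumInd g i (fun t => hgb t i)]
      · intro x hx
        rw [rowList_eq, Multiset.mem_sort] at hx
        refine le_trans (mem_rowM_le g i hx) (Finset.sup_le fun t _ => ?_)
        by_cases ht : t = t₀
        · subst ht
          rw [hgt₀, if_pos rfl]
          exact hs.le
        · rw [hgne t ht]
          exact hmax ▸ Finset.le_sup (f := fun j => f j i) (Finset.mem_univ t)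
      · intro j hj
        have hjb : j < b i := hj.trans (hfb t₀ i)
        rw [count_rowList, count_rowList, count_rowM _ _ hjb, count_rowM _ _ hjb]
        have hv := DFunLike.congr_fun key (⟨i, ⟨j, hjb⟩⟩ : PolVars n b)
        rw [Finsupp.add_apply, Finsupp.add_apply, hvc_if, hvs_if] at hv
        rw [if_neg (show ((⟨j, hjb⟩ : Fin (b i)) : ℕ) ≠ f t₀ i from Nat.ne_of_lt hj)] at hv
        split at hv <;> omega
    · refine Or.inl ?_
      rw [rowList_eq, rowList_eq, rowM, rowM]
      congr 1
      refine Finset.sum_congr rfl fun j _ => ?_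
      have hv := DFunLike.congr_fun key (⟨i, j⟩ : PolVars n b)
      rw [Finsupp.add_apply, Finsupp.add_apply, (hvcne i j hi).1, (hvcne i j hi).2] at hv
      rw [show (∑ t, ind b (g t)) (⟨i, j⟩ : PolVars n b)
          = (∑ t, ind b (f t)) (⟨i, j⟩ : PolVars n b) by omega]

end

end Stmt15Aux


open Stmt15Aux

/-- Fix `k ≥ 1` and a total order on `G(L(I)^k)` extending `≼`.  Let
`u_1, …, u_k ∈ Mon(S∖I)` with `u_j = x^{f j}`, and let `u = ∏_i ∏_j x_{i,(f j) i + 1}` be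
the corresponding minimal generator of `L(I)^k`; set `c_i = max_j (f j) i`.  Then the
colon ideal `({w ∈ G(L(I)^k) : w < u}) : (u)` equals the ideal generated by the variables
`{x_{i,j} : 1 ≤ j ≤ c_i}`; in particular its minimal number of generators equals
`deg lcm(u_1, …, u_k) = Σ_i c_i`. -/
theorem statement15 {K : Type} [Field K] {n : ℕ} (b : Fin n → ℕ)
    (I : Ideal (MvPolynomial (Fin n) K)) (hI : ZeroDimData K b I)
    (k : ℕ) (hk : 1 ≤ k)
    (r : (PolVars n b →₀ ℕ) → (PolVars n b →₀ ℕ) → Prop)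
    (hrefl : ∀ e ∈ GLkE K b I k, r e e)
    (hantisymm : ∀ e ∈ GLkE K b I k, ∀ e' ∈ GLkE K b I k, r e e' → r e' e → e = e')
    (htrans : ∀ e ∈ GLkE K b I k, ∀ e' ∈ GLkE K b I k, ∀ e'' ∈ GLkE K b I k,
      r e e' → r e' e'' → r e e'')
    (htotal : ∀ e ∈ GLkE K b I k, ∀ e' ∈ GLkE K b I k, r e e' ∨ r e' e)
    (hext : ∀ e ∈ GLkE K b I k, ∀ e' ∈ GLkE K b I k,
      (∀ i : Fin n, lexLE (rowList e i) (rowList e' i)) → r e e')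
    (f : Fin k → (Fin n →₀ ℕ)) (hf : ∀ j, (monomial (f j) (1 : K)) ∉ I)
    (e : PolVars n b →₀ ℕ)
    (he : (monomial e (1 : K) : MvPolynomial (PolVars n b) K) = ∏ j, genL K b (f j)) :
    (Ideal.span {p : MvPolynomial (PolVars n b) K |
        ∃ e' ∈ GLkE K b I k, r e' e ∧ e' ≠ e ∧ p = monomial e' (1 : K)}).colon
      (Ideal.span {(monomial e (1 : K) : MvPolynomial (PolVars n b) K)})
    = Ideal.span ((fun v => (X v : MvPolynomial (PolVars n b) K)) ''
        {v : PolVars n b | (v.2 : ℕ) < Finset.univ.sup (fun j => (f j) v.1)}) ∧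
    (Finset.univ.filter (fun v : PolVars n b =>
        (v.2 : ℕ) < Finset.univ.sup (fun j => (f j) v.1))).card
      = ∑ i : Fin n, Finset.univ.sup (fun j => (f j) i)  := by
  classical
  have hb0 : ∀ i, 0 < b i := fun i => (hI.2.2 i).1
  have hfb : ∀ t (i : Fin n), f t i < b i := fun t i => lt_b hI (hf t) i
  have hef : e = ∑ j, ind b (f j) := monomial_inj' (he.trans (prod_genL f))
  have heG : e ∈ GLkE K b I k := ⟨f, hf, he⟩
  have hcb : ∀ i, Finset.univ.sup (fun j => (f j) i) < b i := fun i =>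
    (Finset.sup_lt_iff (hb0 i)).mpr fun t _ => hfb t i
  have hS : {p : MvPolynomial (PolVars n b) K |
      ∃ e' ∈ GLkE K b I k, r e' e ∧ e' ≠ e ∧ p = monomial e' 1}
      = (fun e' => monomial e' (1 : K)) ''
        {e' : PolVars n b →₀ ℕ | e' ∈ GLkE K b I k ∧ r e' e ∧ e' ≠ e} := by
    ext p
    constructor
    · rintro ⟨e', h1, h2, h3, h4⟩
      exact ⟨e', ⟨h1, h2, h3⟩, h4.symm⟩
    · rintro ⟨e', ⟨h1, h2, h3⟩, h4⟩
      exact ⟨e', h1, h2, h3, h4.symm⟩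
  constructor
  · apply le_antisymm
    · intro p hp
      rw [Ideal.mem_colon_span_singleton, hS, mem_ideal_span_monomial_image] at hp
      rw [mem_ideal_span_X_image]
      intro d hd
      have hde : d + e ∈ (p * monomial e (1 : K)).support := by
        rw [mem_support_iff, coeff_mul_monomial, mul_one]
        exact mem_support_iff.mp hd
      obtain ⟨e'', ⟨⟨f'', hf'', he''⟩, hre, hne⟩, hle⟩ := hp _ hde
      have hef'' : e'' = ∑ j, ind b (f'' j) := monomial_inj' (he''.trans (prod_genL f''))
      by_contra hcon
      push_neg at hcon
      have H : ∀ v : PolVars n b, (v.2 : ℕ) < Finset.univ.sup (fun j => (f j) v.1) →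
          e'' v ≤ e v := by
        intro v hv
        have hd0 : d v = 0 := hcon v hv
        have h1 : e'' v ≤ (d + e) v := Finsupp.le_def.mp hle v
        rw [Finsupp.add_apply, hd0, zero_add] at h1
        exact h1
      have hfb'' : ∀ t (i : Fin n), f'' t i < b i := fun t i => lt_b hI (hf'' t) i
      have hrows : ∀ i, lexLE (rowList e i) (rowList e'' i) := by
        intro i
        rw [hef, hef'']
        exact rows_le_of_counts hk f f'' hfb hfb''
          (by intro v hv; rw [← hef, ← hef'']; exact H v hv) i
      exact hne (hantisymm e'' ⟨f'', hf'', he''⟩ e heG hre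
        (hext e heG e'' ⟨f'', hf'', he''⟩ hrows))
    · rw [Ideal.span_le]
      rintro q ⟨v, hv, rfl⟩
      rw [SetLike.mem_coe, Ideal.mem_colon_span_singleton]
      obtain ⟨t₀, -, hmax⟩ := Finset.exists_mem_eq_sup (Finset.univ : Finset (Fin k))
        ⟨⟨0, hk⟩, Finset.mem_univ _⟩ (fun j => (f j) v.1)
      have hsv : (v.2 : ℕ) < f t₀ v.1 := hmax ▸ hv
      obtain ⟨g, hgle, hgle2, hgne, hgrows⟩ :=
        reverse_step f hfb v.1 t₀ hmax.symm (v.2 : ℕ) hsv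
      have hvv : (⟨v.1, ⟨(v.2 : ℕ), hsv.trans (hfb t₀ v.1)⟩⟩ : PolVars n b) = v := by
        obtain ⟨i, j⟩ := v
        rfl
      rw [hvv] at hgle2
      have hgI : ∀ t, monomial (g t) (1 : K) ∉ I := fun t => not_mem_of_le (hgle t) (hf t)
      have he'G : (∑ t, ind b (g t)) ∈ GLkE K b I k := ⟨g, hgI, (prod_genL g).symm⟩
      have hre : r (∑ t, ind b (g t)) e :=
        hext _ he'G e heG (by intro i; rw [hef]; exact hgrows i)
      have hne : (∑ t, ind b (g t)) ≠ e := by rw [hef]; exact hgne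
      have hle2 : (∑ t, ind b (g t)) ≤ Finsupp.single v 1 + e := by
        rw [add_comm, hef]
        exact hgle2
      have hX : (X v : MvPolynomial (PolVars n b) K) = monomial (Finsupp.single v 1) 1 := rfl
      have hXv : (X v : MvPolynomial (PolVars n b) K) * monomial e 1
          = monomial (Finsupp.single v 1 + e) 1 := by
        rw [hX, monomial_mul, one_mul]
      rw [hXv, hS, mem_ideal_span_monomial_image]
      intro xi hxi
      rw [support_monomial, if_neg one_ne_zero, Finset.mem_singleton] at hxi
      subst hxi
      exact ⟨∑ t, ind b (g t), ⟨he'G, hre, hne⟩, hle2⟩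
  · rw [Finset.card_filter, ← Finset.univ_sigma_univ, Finset.sum_sigma]
    refine Finset.sum_congr rfl fun i _ => ?_
    have hcb' := hcb i
    rw [Fin.sum_univ_eq_sum_range
      (fun j => if j < Finset.univ.sup (fun t => f t i) then 1 else 0) (b i)]
    rw [← Finset.card_filter]
    have hfilt : (Finset.range (b i)).filter
        (fun j => j < Finset.univ.sup fun t => (f t) i)
        = Finset.range (Finset.univ.sup fun t => (f t) i) := by
      ext x
      simp only [Finset.mem_filter, Finset.mem_range]
      constructor
      · rintro ⟨-, h2⟩
        exact h2
      · intro h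
        exact ⟨h.trans hcb', h⟩
    rw [hfilt, Finset.card_range]

end
end

section
/- For k ≥ 1 set M_k = max{deg lcm(u_1, …, u_k) : u_1, …, u_k ∈ Mon(S∖I)}. Then: (1) M_k ≤ Σ_{i=1}^n (b_i − 1) for all k; (2) M_k = Σ_{i=1}^n (b_i − 1) for all k ≥ n; and (3) if M_k < Σ_{i=1}^n (b_i − 1), then M_{k+1} > M_k. -/
open MvPolynomial

noncomputable section

def lcmDegSet (K : Type) [Field K] {m : ℕ} (I : Ideal (MvPolynomial (Fin m) K))
    (k : ℕ) : Set ℕ :=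
  {d : ℕ | ∃ f : Fin k → (Fin m →₀ ℕ), (∀ j, (monomial (f j) (1 : K)) ∉ I) ∧
      d = ∑ i : Fin m, Finset.univ.sup (fun j => (f j) i)}

lemma maxLcmDeg_eq_sSup (K : Type) [Field K] {m : ℕ} (I : Ideal (MvPolynomial (Fin m) K))
    (k : ℕ) : maxLcmDeg K I k = sSup (lcmDegSet K I k) := rfl

/-- For `k ≥ 1` set
`M_k = max{deg lcm(u_1,…,u_k) : u_1,…,u_k ∈ Mon(S∖I)}`.  Then:
(1) `M_k ≤ Σ_i (b_i − 1)` for all `k ≥ 1`;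
(2) `M_k = Σ_i (b_i − 1)` for all `k ≥ n`; and
(3) if `M_k < Σ_i (b_i − 1)` then `M_{k+1} > M_k`. -/
theorem statement19 {K : Type} [Field K] {n : ℕ} (b : Fin n → ℕ)
    (I : Ideal (MvPolynomial (Fin n) K)) (hI : ZeroDimData K b I) :
    (∀ k : ℕ, 1 ≤ k → maxLcmDeg K I k ≤ ∑ i : Fin n, (b i - 1)) ∧
    (∀ k : ℕ, n ≤ k → maxLcmDeg K I k = ∑ i : Fin n, (b i - 1)) ∧
    (∀ k : ℕ, 1 ≤ k → maxLcmDeg K I k < ∑ i : Fin n, (b i - 1) →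
      maxLcmDeg K I k < maxLcmDeg K I (k + 1)) := by
  classical
  obtain ⟨-, hItop, hb⟩ := hI
  have hone : (monomial (0 : Fin n →₀ ℕ) (1 : K)) ∉ I := by
    rw [monomial_zero', map_one]
    exact (Ideal.ne_top_iff_one I).mp hItop
  have key : ∀ a : Fin n →₀ ℕ, (monomial a (1 : K)) ∉ I → ∀ i, a i ≤ b i - 1 := by
    intro a ha i
    by_contra hcon
    apply ha
    have h1 : b i ≤ a i := by have := (hb i).1; omega
    have hle : Finsupp.single i (b i) ≤ a := Finsupp.single_le_iff.mpr h1
    have heq : Finsupp.single i (b i) + (a - Finsupp.single i (b i)) = a :=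
      add_tsub_cancel_of_le hle
    have hmono : (monomial a (1 : K)) = monomial (Finsupp.single i (b i)) (1 : K) *
        monomial (a - Finsupp.single i (b i)) (1 : K) := by
      rw [monomial_mul, heq, one_mul]
    rw [hmono]
    exact Ideal.mul_mem_right _ _ (hb i).2.1
  set B := ∑ i : Fin n, (b i - 1) with hBdef
  have hub : ∀ k : ℕ, ∀ d ∈ lcmDegSet K I k, d ≤ B := by
    rintro k d ⟨f, hf, rfl⟩
    exact Finset.sum_le_sum fun i _ => Finset.sup_le fun j _ => key (f j) (hf j) i
  have hmem0 : ∀ k : ℕ, 0 ∈ lcmDegSet K I k := by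
    intro k
    refine ⟨fun _ => 0, fun j => hone, ?_⟩
    simp
  have h1 : ∀ k : ℕ, maxLcmDeg K I k ≤ B := by
    intro k
    rw [maxLcmDeg_eq_sSup]
    exact csSup_le ⟨0, hmem0 k⟩ (hub k)
  have hBmem : ∀ k : ℕ, n ≤ k → B ∈ lcmDegSet K I k := by
    intro k hk
    set f : Fin k → (Fin n →₀ ℕ) := fun j =>
      if h : (j : ℕ) < n then Finsupp.single ⟨(j : ℕ), h⟩ (b ⟨(j : ℕ), h⟩ - 1) else 0
      with hfdef
    have hfI : ∀ j, (monomial (f j) (1 : K)) ∉ I := by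
      intro j
      by_cases h : (j : ℕ) < n
      · have : f j = Finsupp.single ⟨(j : ℕ), h⟩ (b ⟨(j : ℕ), h⟩ - 1) := by
          rw [hfdef]; simp only [dif_pos h]
        rw [this]
        exact (hb _).2.2 _ (by have := (hb (⟨(j : ℕ), h⟩ : Fin n)).1; omega)
      · have : f j = 0 := by rw [hfdef]; simp only [dif_neg h]
        rw [this]; exact hone
    refine ⟨f, hfI, (Finset.sum_congr rfl fun i _ => ?_)⟩
    apply le_antisymm
    · have hj : ((Fin.castLE hk i : Fin k) : ℕ) < n := by
        simp [i.isLt]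
      have hfe : f (Fin.castLE hk i) i = b i - 1 := by
        rw [hfdef]
        simp only [dif_pos hj]
        have hii : (⟨((Fin.castLE hk i : Fin k) : ℕ), hj⟩ : Fin n) = i := by
          apply Fin.ext; simp
        rw [hii, Finsupp.single_eq_same]
      calc b i - 1 = f (Fin.castLE hk i) i := hfe.symm
        _ ≤ _ := Finset.le_sup (f := fun j => (f j) i) (Finset.mem_univ _)
    · exact Finset.sup_le fun j _ => key (f j) (hfI j) i
  have h2 : ∀ k : ℕ, n ≤ k → maxLcmDeg K I k = B := by
    intro k hk
    refine le_antisymm (h1 k) ?_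
    rw [maxLcmDeg_eq_sSup]
    exact le_csSup ⟨B, hub k⟩ (hBmem k hk)
  refine ⟨fun k _ => h1 k, fun k hk => h2 k hk, ?_⟩
  intro k _ hlt
  have hmem : maxLcmDeg K I k ∈ lcmDegSet K I k := by
    rw [maxLcmDeg_eq_sSup]
    exact Nat.sSup_mem ⟨0, hmem0 k⟩ ⟨B, hub k⟩
  obtain ⟨f, hfI, hfd⟩ := hmem
  have hex : ∃ i : Fin n, Finset.univ.sup (fun j => (f j) i) < b i - 1 := by
    by_contra hc
    push_neg at hc
    have : B ≤ maxLcmDeg K I k := by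
      rw [hfd]
      exact Finset.sum_le_sum fun i _ => hc i
    omega
  obtain ⟨i₀, hi₀⟩ := hex
  set g : Fin (k + 1) → (Fin n →₀ ℕ) := Fin.cons (Finsupp.single i₀ (b i₀ - 1)) f with hgdef
  have hgI : ∀ j, (monomial (g j) (1 : K)) ∉ I := by
    intro j
    refine Fin.cases ?_ ?_ j
    · rw [hgdef]
      simp only [Fin.cons_zero]
      exact (hb i₀).2.2 _ (by have := (hb i₀).1; omega)
    · intro j'
      rw [hgdef]
      simp only [Fin.cons_succ]
      exact hfI j'
  have hsum : (∑ i : Fin n, Finset.univ.sup fun j => (f j) i) <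
      ∑ i : Fin n, Finset.univ.sup fun j => (g j) i := by
    apply Finset.sum_lt_sum
    · intro i _
      apply Finset.sup_le
      intro j _
      calc (f j) i = (g j.succ) i := by rw [hgdef]; simp
        _ ≤ _ := Finset.le_sup (f := fun j => (g j) i) (Finset.mem_univ _)
    · refine ⟨i₀, Finset.mem_univ _, ?_⟩
      calc Finset.univ.sup (fun j => (f j) i₀) < b i₀ - 1 := hi₀
        _ = (g 0) i₀ := by rw [hgdef]; simp
        _ ≤ _ := Finset.le_sup (f := fun j => (g j) i₀) (Finset.mem_univ _)
  have hgmem : (∑ i : Fin n, Finset.univ.sup fun j => (g j) i) ∈ lcmDegSet K I (k + 1) :=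
    ⟨g, hgI, rfl⟩
  have hle : (∑ i : Fin n, Finset.univ.sup fun j => (g j) i) ≤ maxLcmDeg K I (k + 1) := by
    rw [maxLcmDeg_eq_sSup]
    exact le_csSup ⟨B, hub (k + 1)⟩ hgmem
  omega

end
end
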